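/- arXiv:1604.01515 — 8 statements merged into one kernel-verified Lean document; each statement's English description precedes it below -/
import Mathlib

section
/- Let D : Ω → β be a random variable and Θ_1,…,Θ_M : Ω → α be i.i.d. random variables with common law ν, the family (Θ_1,…,Θ_M, D) being independent. Let g : α × β → ℝ be measurable with g(Θ_1, D) square-integrable, let h(d) := ∫ g(θ, d) dν(θ), and let c ∈ ℝ. Then E[((1/M) Σ_{j=1}^M g(Θ_j, D) − c)²] = E[(h(D) − c)²] + (1/M)(E[g(Θ_1, D)²] − E[h(D)²]). -/
open MeasureTheory ProbabilityTheory
open scoped ENNReal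

lemma expand_sq_integral {γ : Type*} [MeasurableSpace γ] (P : Measure γ)
    [IsProbabilityMeasure P] (f : γ → ℝ) (c : ℝ)
    (h1 : Integrable f P) (h2 : Integrable (fun x => f x ^ 2) P) :
    ∫ x, (f x - c) ^ 2 ∂P = ∫ x, f x ^ 2 ∂P - 2 * c * (∫ x, f x ∂P) + c ^ 2 := by
  have hmul : Integrable (fun x => 2 * f x * c) P := (h1.const_mul 2).mul_const c
  have : ∫ x, (f x - c) ^ 2 ∂P = ∫ x, (f x ^ 2 - 2 * f x * c + c ^ 2) ∂P := by
    congr 1; funext x; ring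
  have hsub : Integrable (fun x => f x ^ 2 - 2 * f x * c) P := h2.sub hmul
  rw [this, integral_add hsub (integrable_const _), integral_sub h2 hmul,
    integral_const, probReal_univ]
  simp only [ENNReal.toReal_one, one_smul]
  rw [show (fun x => 2 * f x * c) = fun x => (2 * c) * f x from by funext x; ring,
    integral_const_mul]

lemma sq_integral_le {γ : Type*} [MeasurableSpace γ] (P : Measure γ)
    [IsProbabilityMeasure P] (f : γ → ℝ) (hm : AEStronglyMeasurable f P)
    (h2 : Integrable (fun x => f x ^ 2) P) :
    (∫ x, f x ∂P) ^ 2 ≤ ∫ x, f x ^ 2 ∂P := by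
  have hL2 : MemLp f 2 P := (memLp_two_iff_integrable_sq hm).2 h2
  have := variance_nonneg f P
  rw [variance_eq_sub hL2] at this
  simp only [Pi.pow_apply] at this ⊢
  linarith [this]

/-- Risk decomposition of a finite forest: if `Θ₁, …, Θ_M` are i.i.d. with law `ν`,
independent of the data `D`, `g(Θ₁, D)` is square-integrable, and
`h(d) = ∫ g(θ, d) dν(θ)` is the infinite forest, then
`E[((1/M) Σⱼ g(Θⱼ, D) − c)²] = E[(h(D) − c)²] + (1/M)(E[g(Θ₁, D)²] − E[h(D)²])`. -/
theorem finite_forest_risk_decomposition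
    {Ω : Type*} [MeasurableSpace Ω] {μ : Measure Ω} [IsProbabilityMeasure μ]
    {α β : Type*} [MeasurableSpace α] [MeasurableSpace β]
    (M : ℕ) (hM : 0 < M) (Θ : Fin M → Ω → α) (D : Ω → β)
    (hΘ : ∀ j, Measurable (Θ j)) (hD : Measurable D)
    (ν : Measure α) (hlaw : ∀ j, Measure.map (Θ j) μ = ν)
    (hiid : iIndepFun Θ μ)
    (hindep : IndepFun (fun ω j => Θ j ω) D μ)
    (g : α × β → ℝ) (hg : Measurable g)
    (hg2 : MemLp (fun ω => g (Θ ⟨0, hM⟩ ω, D ω)) 2 μ)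
    (c : ℝ) :
    ∫ ω, ((M : ℝ)⁻¹ * ∑ j, g (Θ j ω, D ω) - c) ^ 2 ∂μ
      = ∫ ω, ((∫ θ, g (θ, D ω) ∂ν) - c) ^ 2 ∂μ
        + (M : ℝ)⁻¹ * ((∫ ω, (g (Θ ⟨0, hM⟩ ω, D ω)) ^ 2 ∂μ)
            - ∫ ω, (∫ θ, g (θ, D ω) ∂ν) ^ 2 ∂μ) := by
  classical
  set j0 : Fin M := ⟨0, hM⟩ with hj0
  haveI hνP : IsProbabilityMeasure ν := by
    rw [← hlaw j0]; exact Measure.isProbabilityMeasure_map (hΘ j0).aemeasurable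
  set ρ : Measure β := μ.map D with hρdef
  haveI hρP : IsProbabilityMeasure ρ := Measure.isProbabilityMeasure_map hD.aemeasurable
  -- joint law of (Θ j, D)
  have hA : ∀ j, μ.map (fun ω => (Θ j ω, D ω)) = ν.prod ρ := by
    intro j
    have hind : IndepFun (Θ j) D μ :=
      hindep.comp (measurable_pi_apply j) measurable_id
    rw [← hlaw j, hρdef]
    exact (indepFun_iff_map_prod_eq_prod_map_map (hΘ j).aemeasurable
      hD.aemeasurable).mp hind
  -- joint law of ((Θ j, Θ k), D) for j ≠ k
  have hB : ∀ j k, j ≠ k →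
      μ.map (fun ω => ((Θ j ω, Θ k ω), D ω)) = (ν.prod ν).prod ρ := by
    intro j k hjk
    have hpair : μ.map (fun ω => (Θ j ω, Θ k ω)) = ν.prod ν := by
      have := (indepFun_iff_map_prod_eq_prod_map_map (hΘ j).aemeasurable
        (hΘ k).aemeasurable).mp (hiid.indepFun hjk)
      rwa [hlaw j, hlaw k] at this
    have hind : IndepFun (fun ω => (Θ j ω, Θ k ω)) D μ :=
      hindep.comp ((measurable_pi_apply j).prodMk (measurable_pi_apply k))
        measurable_id
    rw [← hpair, hρdef]
    exact (indepFun_iff_map_prod_eq_prod_map_map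
      ((hΘ j).prodMk (hΘ k)).aemeasurable hD.aemeasurable).mp hind
  -- square integrability transferred to the product measure
  have hgL2 : MemLp g 2 (ν.prod ρ) := by
    rw [← hA j0]
    exact (memLp_map_measure_iff hg.aestronglyMeasurable
      ((hΘ j0).prodMk hD).aemeasurable).mpr hg2
  have hXL2 : ∀ j, MemLp (fun ω => g (Θ j ω, D ω)) 2 μ := by
    intro j
    have h0 := hgL2
    rw [← hA j] at h0
    exact (memLp_map_measure_iff hg.aestronglyMeasurable
      ((hΘ j).prodMk hD).aemeasurable).mp h0
  have hg_int : Integrable g (ν.prod ρ) := hgL2.integrable one_le_two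
  have hgsq_int : Integrable (fun p => g p ^ 2) (ν.prod ρ) := hgL2.integrable_sq
  set h' : β → ℝ := fun d => ∫ θ, g (θ, d) ∂ν with hh'
  have smh' : StronglyMeasurable h' := hg.stronglyMeasurable.integral_prod_left'
  have h'_int : Integrable h' ρ := hg_int.integral_prod_right
  have k_int : Integrable (fun d => ∫ θ, g (θ, d) ^ 2 ∂ν) ρ :=
    hgsq_int.integral_prod_right
  have h'sq_int : Integrable (fun d => h' d ^ 2) ρ := by
    refine Integrable.mono' k_int
      ((smh'.measurable.pow_const 2).aestronglyMeasurable) ?_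
    filter_upwards [hg_int.prod_left_ae, hgsq_int.prod_left_ae] with d hd1 hd2
    rw [Real.norm_eq_abs, abs_of_nonneg (sq_nonneg _)]
    exact sq_integral_le ν (fun θ => g (θ, d))
      (hg.comp (measurable_id.prodMk measurable_const)).aestronglyMeasurable hd2
  set s : ℝ := ∫ p, g p ^ 2 ∂(ν.prod ρ) with hsdef
  set t : ℝ := ∫ d, h' d ^ 2 ∂ρ with htdef
  set m : ℝ := ∫ d, h' d ∂ρ with hmdef
  -- mean identity
  have I_mean : ∀ j, ∫ ω, g (Θ j ω, D ω) ∂μ = m := by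
    intro j
    have h1 : ∫ ω, g (Θ j ω, D ω) ∂μ = ∫ p, g p ∂(ν.prod ρ) := by
      rw [← hA j]
      exact (integral_map ((hΘ j).prodMk hD).aemeasurable
        hg.aestronglyMeasurable).symm
    rw [h1, integral_prod_symm g hg_int]
  -- second moment identity
  have I_sq : ∀ j, ∫ ω, g (Θ j ω, D ω) ^ 2 ∂μ = s := by
    intro j
    rw [hsdef, ← hA j]
    exact (integral_map ((hΘ j).prodMk hD).aemeasurable
      (hg.pow_const 2).aestronglyMeasurable).symm
  -- cross moment identity
  have I_cross : ∀ j k, j ≠ k →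
      ∫ ω, g (Θ j ω, D ω) * g (Θ k ω, D ω) ∂μ = t := by
    intro j k hjk
    set F : (α × α) × β → ℝ := fun q => g (q.1.1, q.2) * g (q.1.2, q.2) with hF
    have hπ1 : Measurable fun q : (α × α) × β => (q.1.1, q.2) :=
      (measurable_fst.comp measurable_fst).prodMk measurable_snd
    have hπ2 : Measurable fun q : (α × α) × β => (q.1.2, q.2) :=
      (measurable_snd.comp measurable_fst).prodMk measurable_snd
    have hFmeas : Measurable F := (hg.comp hπ1).mul (hg.comp hπ2)
    have hmap1 : ((ν.prod ν).prod ρ).map (fun q : (α × α) × β => (q.1.1, q.2))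
        = ν.prod ρ := by
      have he : (fun q : (α × α) × β => (q.1.1, q.2))
          = Prod.map Prod.fst (id : β → β) := rfl
      rw [he, ← Measure.map_prod_map _ _ measurable_fst measurable_id,
        Measure.map_fst_prod, Measure.map_id]
      simp
    have hmap2 : ((ν.prod ν).prod ρ).map (fun q : (α × α) × β => (q.1.2, q.2))
        = ν.prod ρ := by
      have he : (fun q : (α × α) × β => (q.1.2, q.2))
          = Prod.map Prod.snd (id : β → β) := rfl
      rw [he, ← Measure.map_prod_map _ _ measurable_snd measurable_id,
        Measure.map_snd_prod, Measure.map_id]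
      simp
    have hF1 : MemLp (fun q : (α × α) × β => g (q.1.1, q.2)) 2
        ((ν.prod ν).prod ρ) := by
      have h0 := hgL2
      rw [← hmap1] at h0
      exact (memLp_map_measure_iff hg.aestronglyMeasurable hπ1.aemeasurable).mp h0
    have hF2 : MemLp (fun q : (α × α) × β => g (q.1.2, q.2)) 2
        ((ν.prod ν).prod ρ) := by
      have h0 := hgL2
      rw [← hmap2] at h0
      exact (memLp_map_measure_iff hg.aestronglyMeasurable hπ2.aemeasurable).mp h0
    have hpqr : (1 : ℝ≥0∞) / 1 = 1 / 2 + 1 / 2 := by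
      rw [ENNReal.div_add_div_same, one_div_one, one_add_one_eq_two]
      exact (ENNReal.div_self two_ne_zero ENNReal.ofNat_ne_top).symm
    have hF_int : Integrable F ((ν.prod ν).prod ρ) := by
      have h0 : MemLp ((fun q : (α × α) × β => g (q.1.1, q.2)) •
          (fun q : (α × α) × β => g (q.1.2, q.2))) 1 ((ν.prod ν).prod ρ) :=
        hF2.smul hF1
      exact h0.integrable le_rfl
    have step1 : ∫ ω, g (Θ j ω, D ω) * g (Θ k ω, D ω) ∂μ
        = ∫ q, F q ∂((ν.prod ν).prod ρ) := by
      rw [← hB j k hjk]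
      exact (integral_map (((hΘ j).prodMk (hΘ k)).prodMk hD).aemeasurable
        hFmeas.aestronglyMeasurable).symm
    rw [step1, integral_prod_symm F hF_int]
    have inner : ∀ d, (∫ q' : α × α, F (q', d) ∂(ν.prod ν)) = h' d ^ 2 := by
      intro d
      have := integral_prod_mul (μ := ν) (ν := ν)
        (f := fun θ => g (θ, d)) (g := fun θ => g (θ, d))
      simp only [hF] at *
      rw [this]
      ring
    rw [htdef]
    exact integral_congr_ae (Filter.Eventually.of_forall fun d => inner d)
  -- the finite-forest mean
  have hSL2 : MemLp (fun ω => (M : ℝ)⁻¹ * ∑ j, g (Θ j ω, D ω)) 2 μ := by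
    have hsum : MemLp (fun ω => ∑ j, g (Θ j ω, D ω)) 2 μ :=
      memLp_finset_sum Finset.univ fun j _ => hXL2 j
    exact hsum.const_mul _
  have hMne : (M : ℝ) ≠ 0 := Nat.cast_ne_zero.mpr hM.ne'
  -- integral of the forest mean
  have ImeanS : ∫ ω, (M : ℝ)⁻¹ * ∑ j, g (Θ j ω, D ω) ∂μ = m := by
    rw [integral_const_mul, integral_finset_sum Finset.univ
      (fun j _ => (hXL2 j).integrable one_le_two)]
    rw [Finset.sum_congr rfl (fun j _ => I_mean j), Finset.sum_const,
      Finset.card_univ, Fintype.card_fin, nsmul_eq_mul]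
    field_simp
  -- integral of the squared forest mean
  have hprod_int : ∀ j k, Integrable
      (fun ω => g (Θ j ω, D ω) * g (Θ k ω, D ω)) μ := by
    intro j k
    have h0 : MemLp ((fun ω => g (Θ j ω, D ω)) • (fun ω => g (Θ k ω, D ω))) 1 μ :=
      (hXL2 k).smul (hXL2 j)
    exact h0.integrable le_rfl
  have IsqS : ∫ ω, ((M : ℝ)⁻¹ * ∑ j, g (Θ j ω, D ω)) ^ 2 ∂μ
      = (M : ℝ)⁻¹ ^ 2 * ((M : ℝ) * ((s - t) + (M : ℝ) * t)) := by
    have hexp : (fun ω => ((M : ℝ)⁻¹ * ∑ j, g (Θ j ω, D ω)) ^ 2)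
        = fun ω => (M : ℝ)⁻¹ ^ 2 *
            ∑ j, ∑ k, g (Θ j ω, D ω) * g (Θ k ω, D ω) := by
      funext ω
      rw [mul_pow]
      congr 1
      rw [pow_two, Finset.sum_mul_sum]
    rw [hexp, integral_const_mul]
    congr 1
    rw [integral_finset_sum Finset.univ fun j _ =>
      integrable_finset_sum Finset.univ fun k _ => hprod_int j k]
    have hinner : ∀ j : Fin M,
        ∫ ω, (∑ k, g (Θ j ω, D ω) * g (Θ k ω, D ω)) ∂μ = (s - t) + (M : ℝ) * t := by
      intro j
      rw [integral_finset_sum Finset.univ fun k _ => hprod_int j k]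
      have hcell : ∀ k : Fin M, ∫ ω, g (Θ j ω, D ω) * g (Θ k ω, D ω) ∂μ
          = (if k = j then s - t else 0) + t := by
        intro k
        by_cases h : k = j
        · subst h
          rw [if_pos rfl]
          have : (fun ω => g (Θ k ω, D ω) * g (Θ k ω, D ω))
              = fun ω => g (Θ k ω, D ω) ^ 2 := by funext ω; ring
          rw [this, I_sq k]
          ring
        · rw [if_neg h, zero_add]
          exact I_cross j k fun e => h e.symm
      rw [Finset.sum_congr rfl (fun k _ => hcell k), Finset.sum_add_distrib,
        Finset.sum_ite_eq' Finset.univ j (fun _ => s - t), if_pos (Finset.mem_univ j),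
        Finset.sum_const, Finset.card_univ, Fintype.card_fin, nsmul_eq_mul]
    rw [Finset.sum_congr rfl (fun j _ => hinner j), Finset.sum_const,
      Finset.card_univ, Fintype.card_fin, nsmul_eq_mul]
  -- the LHS expansion
  have GLHS : ∫ ω, ((M : ℝ)⁻¹ * ∑ j, g (Θ j ω, D ω) - c) ^ 2 ∂μ
      = (M : ℝ)⁻¹ ^ 2 * ((M : ℝ) * ((s - t) + (M : ℝ) * t)) - 2 * c * m + c ^ 2 := by
    rw [expand_sq_integral μ _ c (hSL2.integrable one_le_two) hSL2.integrable_sq,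
      IsqS, ImeanS]
  -- the RHS pieces
  have GR1 : ∫ ω, ((∫ θ, g (θ, D ω) ∂ν) - c) ^ 2 ∂μ = t - 2 * c * m + c ^ 2 := by
    have e1 : ∫ ω, ((∫ θ, g (θ, D ω) ∂ν) - c) ^ 2 ∂μ = ∫ d, (h' d - c) ^ 2 ∂ρ := by
      exact (integral_map hD.aemeasurable
        (((smh'.measurable.sub measurable_const).pow_const 2).aestronglyMeasurable)).symm
    rw [e1, expand_sq_integral ρ h' c h'_int h'sq_int]
  have GR3 : ∫ ω, (∫ θ, g (θ, D ω) ∂ν) ^ 2 ∂μ = t := by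
    exact (integral_map hD.aemeasurable
      ((smh'.measurable.pow_const 2).aestronglyMeasurable)).symm
  rw [GLHS, GR1, I_sq j0, GR3]
  field_simp
  ring
end

section
/- Let D : Ω → β be a random variable and Θ_1,…,Θ_M : Ω → α be i.i.d. random variables with common law ν, the family (Θ_1,…,Θ_M, D) being independent. Let g : α × β → ℝ be measurable with g(Θ_1, D) square-integrable, let h(d) := ∫ g(θ, d) dν(θ), and let c ∈ ℝ. Then E[(h(D) − c)²] ≤ E[((1/M) Σ_{j=1}^M g(Θ_j, D) − c)²], i.e., the quadratic risk of the infinite forest is at most that of any finite forest with M trees. -/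
open MeasureTheory ProbabilityTheory

/-- The infinite forest has the smallest quadratic risk: if `Θ₁, …, Θ_M` are
i.i.d. with law `ν`, independent of the data `D`, `g(Θ₁, D)` is
square-integrable, and `h(d) = ∫ g(θ, d) dν(θ)` is the infinite forest, then
`E[(h(D) − c)²] ≤ E[((1/M) Σⱼ g(Θⱼ, D) − c)²]`. -/
theorem infinite_forest_risk_le_finite_forest_risk
    {Ω : Type*} [MeasurableSpace Ω] {μ : Measure Ω} [IsProbabilityMeasure μ]
    {α β : Type*} [MeasurableSpace α] [MeasurableSpace β]
    (M : ℕ) (hM : 0 < M) (Θ : Fin M → Ω → α) (D : Ω → β)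
    (hΘ : ∀ j, Measurable (Θ j)) (hD : Measurable D)
    (ν : Measure α) (hlaw : ∀ j, Measure.map (Θ j) μ = ν)
    (hiid : iIndepFun Θ μ)
    (hindep : IndepFun (fun ω j => Θ j ω) D μ)
    (g : α × β → ℝ) (hg : Measurable g)
    (hg2 : MemLp (fun ω => g (Θ ⟨0, hM⟩ ω, D ω)) 2 μ)
    (c : ℝ) :
    ∫ ω, ((∫ θ, g (θ, D ω) ∂ν) - c) ^ 2 ∂μ
      ≤ ∫ ω, ((M : ℝ)⁻¹ * ∑ j, g (Θ j ω, D ω) - c) ^ 2 ∂μ := by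
  classical
  have hDm : AEMeasurable D μ := hD.aemeasurable
  set μD : Measure β := μ.map D with hμDdef
  haveI : IsProbabilityMeasure μD := Measure.isProbabilityMeasure_map hDm
  haveI hνP : IsProbabilityMeasure ν := by
    rw [← hlaw ⟨0, hM⟩]; exact Measure.isProbabilityMeasure_map (hΘ _).aemeasurable
  -- notation
  set H : β → ℝ := fun d => ∫ θ, g (θ, d) ∂ν with hHdef
  set F : Fin M → Ω → ℝ := fun j ω => g (Θ j ω, D ω) with hFdef
  set g' : β × α → ℝ := fun p => g (p.2, p.1) with hg'def
  have hg'm : Measurable g' := hg.comp (measurable_snd.prodMk measurable_fst)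
  have hHm : StronglyMeasurable H := hg.stronglyMeasurable.integral_prod_left'
  have hφm : ∀ j, Measurable fun ω => (D ω, Θ j ω) := fun j => hD.prodMk (hΘ j)
  -- joint laws
  have hmap1 : ∀ j, μ.map (fun ω => (D ω, Θ j ω)) = μD.prod ν := by
    intro j
    have h1 : IndepFun D (Θ j) μ :=
      (hindep.comp (measurable_pi_apply j) measurable_id).symm
    rw [(indepFun_iff_map_prod_eq_prod_map_map hDm (hΘ j).aemeasurable).mp h1, hlaw j]
  have hmap2 : ∀ j k, j ≠ k → μ.map (fun ω => (D ω, (Θ j ω, Θ k ω))) = μD.prod (ν.prod ν) := by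
    intro j k hjk
    have hjkm : Measurable fun ω => (Θ j ω, Θ k ω) := (hΘ j).prodMk (hΘ k)
    have h1 : IndepFun D (fun ω => (Θ j ω, Θ k ω)) μ :=
      (hindep.comp ((measurable_pi_apply j).prodMk (measurable_pi_apply k))
        measurable_id).symm
    have h2 : μ.map (fun ω => (Θ j ω, Θ k ω)) = ν.prod ν := by
      rw [(indepFun_iff_map_prod_eq_prod_map_map (hΘ j).aemeasurable (hΘ k).aemeasurable).mp
        (hiid.indepFun hjk), hlaw j, hlaw k]
    rw [(indepFun_iff_map_prod_eq_prod_map_map hDm hjkm.aemeasurable).mp h1, h2]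
  -- square integrability
  have hG2 : MemLp g' 2 (μD.prod ν) := by
    rw [← hmap1 ⟨0, hM⟩]
    exact (memLp_map_measure_iff hg'm.aestronglyMeasurable (hφm _).aemeasurable).mpr hg2
  have hF2 : ∀ j, MemLp (F j) 2 μ := fun j =>
    (memLp_map_measure_iff hg'm.aestronglyMeasurable (hφm j).aemeasurable).mp
      (by rw [hmap1 j]; exact hG2)
  have hFint : ∀ j, Integrable (F j) μ := fun j => (hF2 j).integrable one_le_two
  have hFsq : ∀ j, Integrable (fun ω => F j ω ^ 2) μ := fun j => (hF2 j).integrable_sq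
  have hFmul : ∀ j k, Integrable (fun ω => F j ω * F k ω) μ := by
    intro j k
    have hb : Integrable (fun ω => (F j ω ^ 2 + F k ω ^ 2) / 2) μ :=
      ((hFsq j).add (hFsq k)).div_const 2
    refine Integrable.mono' hb
      ((hF2 j).aestronglyMeasurable.mul (hF2 k).aestronglyMeasurable) ?_
    refine Filter.Eventually.of_forall fun ω => ?_
    rw [Real.norm_eq_abs]
    nlinarith [sq_nonneg (|F j ω| - |F k ω|), abs_mul (F j ω) (F k ω),
      sq_abs (F j ω), sq_abs (F k ω), abs_nonneg (F j ω * F k ω)]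
  -- the three kinds of integrals
  set I1 : ℝ := ∫ d, H d ∂μD with hI1def
  set A : ℝ := ∫ d, H d ^ 2 ∂μD with hAdef
  set b : ℝ := ∫ p, g' p ^ 2 ∂(μD.prod ν) with hbdef
  have hint1 : ∀ j, ∫ ω, F j ω ∂μ = I1 := by
    intro j
    have h0 : ∫ ω, F j ω ∂μ = ∫ p, g' p ∂(μD.prod ν) := by
      rw [← hmap1 j, integral_map (hφm j).aemeasurable hg'm.aestronglyMeasurable]
    rw [h0, integral_prod _ (hG2.integrable one_le_two)]
  have hint2 : ∀ j, ∫ ω, F j ω * F j ω ∂μ = b := by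
    intro j
    have h0 : ∫ ω, F j ω * F j ω ∂μ = ∫ p, g' p * g' p ∂(μD.prod ν) := by
      rw [← hmap1 j,
        integral_map (f := fun p => g' p * g' p) (hφm j).aemeasurable (hg'm.mul hg'm).aestronglyMeasurable]
    rw [h0, hbdef]
    congr 1; funext p; ring
  have hint3 : ∀ j k, j ≠ k → ∫ ω, F j ω * F k ω ∂μ = A := by
    intro j k hjk
    set G2 : β × (α × α) → ℝ := fun q => g (q.2.1, q.1) * g (q.2.2, q.1) with hG2def
    have hG2m : Measurable G2 :=
      (hg.comp ((measurable_snd.fst).prodMk measurable_fst)).mul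
        (hg.comp ((measurable_snd.snd).prodMk measurable_fst))
    have hφ : Measurable fun ω => (D ω, (Θ j ω, Θ k ω)) :=
      hD.prodMk ((hΘ j).prodMk (hΘ k))
    have h0 : ∫ ω, F j ω * F k ω ∂μ = ∫ q, G2 q ∂(μD.prod (ν.prod ν)) := by
      rw [← hmap2 j k hjk, integral_map hφ.aemeasurable hG2m.aestronglyMeasurable]
    have hG2int : Integrable G2 (μD.prod (ν.prod ν)) := by
      rw [← hmap2 j k hjk]
      exact (integrable_map_measure hG2m.aestronglyMeasurable hφ.aemeasurable).mpr
        (hFmul j k)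
    rw [h0, integral_prod _ hG2int]
    have hinner : ∀ d, (∫ p : α × α, G2 (d, p) ∂(ν.prod ν)) = H d ^ 2 := by
      intro d
      have := integral_prod_mul (μ := ν) (ν := ν)
        (fun x => g (x, d)) (fun y => g (y, d))
      simp only [hG2def] at *
      rw [sq]
      exact this
    simp_rw [hinner]
    rfl
  -- Jensen : A ≤ b
  have hGfun : Integrable (fun d => ∫ x, g' (d, x) ^ 2 ∂ν) μD :=
    hG2.integrable_sq.integral_prod_left
  have hHint : Integrable H μD := (hG2.integrable one_le_two).integral_prod_left
  have hae : ∀ᵐ d ∂μD, H d ^ 2 ≤ ∫ x, g' (d, x) ^ 2 ∂ν := by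
    filter_upwards [hG2.integrable_sq.prod_right_ae] with d hd
    have hsm : AEStronglyMeasurable (fun x => g (x, d)) ν :=
      (hg.comp (measurable_id.prodMk measurable_const)).aestronglyMeasurable
    have hmem : MemLp (fun x => g (x, d)) 2 ν :=
      (memLp_two_iff_integrable_sq hsm).mpr hd
    have h1 := variance_nonneg (fun x => g (x, d)) ν
    rw [variance_eq_sub hmem] at h1
    have h2 : (∫ x, g (x, d) ∂ν) ^ 2 ≤ ∫ x, g (x, d) ^ 2 ∂ν := by
      simp only [Pi.pow_apply] at h1
      linarith
    exact h2
  have hH2int : Integrable (fun d => H d ^ 2) μD := by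
    refine hGfun.mono' (hHm.measurable.pow_const 2).aestronglyMeasurable ?_
    filter_upwards [hae] with d hd
    rw [Real.norm_eq_abs, abs_of_nonneg (sq_nonneg _)]
    exact hd
  have hAb : A ≤ b := by
    calc A ≤ ∫ d, ∫ x, g' (d, x) ^ 2 ∂ν ∂μD := integral_mono_ae hH2int hGfun hae
      _ = b := (integral_prod _ hG2.integrable_sq).symm
  -- LHS
  have hLHS : ∫ ω, ((∫ θ, g (θ, D ω) ∂ν) - c) ^ 2 ∂μ = A - 2 * c * I1 + c ^ 2 := by
    have hfm : AEStronglyMeasurable (fun d => (H d - c) ^ 2) μD :=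
      ((hHm.measurable.sub measurable_const).pow_const 2).aestronglyMeasurable
    have h0 : ∫ ω, ((∫ θ, g (θ, D ω) ∂ν) - c) ^ 2 ∂μ = ∫ d, (H d - c) ^ 2 ∂μD :=
      (integral_map hDm hfm).symm
    rw [h0]
    have hexp : ∀ d, (H d - c) ^ 2 = H d ^ 2 - 2 * c * H d + c ^ 2 := fun d => by ring
    simp_rw [hexp]
    have h1 : Integrable (fun d => 2 * c * H d) μD := hHint.const_mul (2 * c)
    have h2 : Integrable (fun d => H d ^ 2 - 2 * c * H d) μD := hH2int.sub h1
    rw [integral_add h2 (integrable_const _),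
      integral_sub hH2int h1, integral_const_mul, integral_const,
      probReal_univ, smul_eq_mul, one_mul]
  -- RHS
  have hintFF : ∀ j k : Fin M, ∫ ω, F j ω * F k ω ∂μ = if j = k then b else A := by
    intro j k
    split_ifs with h
    · subst h; exact hint2 j
    · exact hint3 j k h
  have hRHS : ∫ ω, ((M : ℝ)⁻¹ * ∑ j, g (Θ j ω, D ω) - c) ^ 2 ∂μ
      = ((M : ℝ)⁻¹) ^ 2 * ((M : ℝ) * ((M : ℝ) * A + (b - A))) - 2 * c * I1 + c ^ 2 := by
    have hexp : ∀ ω, ((M : ℝ)⁻¹ * ∑ j, F j ω - c) ^ 2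
        = ((M : ℝ)⁻¹) ^ 2 * (∑ j, ∑ k, F j ω * F k ω)
          - 2 * c * (M : ℝ)⁻¹ * ∑ j, F j ω + c ^ 2 := by
      intro ω
      have e1 : (∑ j, F j ω) * (∑ k, F k ω) = ∑ j, ∑ k, F j ω * F k ω :=
        Finset.sum_mul_sum _ _ _ _
      rw [← e1]
      ring
    calc ∫ ω, ((M : ℝ)⁻¹ * ∑ j, g (Θ j ω, D ω) - c) ^ 2 ∂μ
        = ∫ ω, (((M : ℝ)⁻¹) ^ 2 * (∑ j, ∑ k, F j ω * F k ω)
          - 2 * c * (M : ℝ)⁻¹ * ∑ j, F j ω + c ^ 2) ∂μ := by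
          exact integral_congr_ae (Filter.Eventually.of_forall fun ω => hexp ω)
      _ = ((M : ℝ)⁻¹) ^ 2 * (∑ j, ∑ k, ∫ ω, F j ω * F k ω ∂μ)
          - 2 * c * (M : ℝ)⁻¹ * ∑ j, ∫ ω, F j ω ∂μ + c ^ 2 := by
          have hintdd : Integrable (fun ω => ∑ j, ∑ k, F j ω * F k ω) μ :=
            integrable_finset_sum _ fun j _ => integrable_finset_sum _ fun k _ => hFmul j k
          have hints : Integrable (fun ω => ∑ j, F j ω) μ :=
            integrable_finset_sum _ fun j _ => hFint j
          have ht1 : Integrable (fun ω => ((M : ℝ)⁻¹) ^ 2 * ∑ j, ∑ k, F j ω * F k ω) μ :=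
            hintdd.const_mul _
          have ht2 : Integrable (fun ω => 2 * c * (M : ℝ)⁻¹ * ∑ j, F j ω) μ :=
            hints.const_mul _
          have ht12 : Integrable (fun ω => ((M : ℝ)⁻¹) ^ 2 * (∑ j, ∑ k, F j ω * F k ω)
              - 2 * c * (M : ℝ)⁻¹ * ∑ j, F j ω) μ := ht1.sub ht2
          rw [integral_add ht12 (integrable_const _),
            integral_sub ht1 ht2,
            integral_const_mul, integral_const_mul, integral_const,
            probReal_univ, smul_eq_mul, one_mul,
            integral_finset_sum _ fun j _ => hFint j]
          have hdd : ∑ j, ∫ ω, ∑ k, F j ω * F k ω ∂μ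
              = ∑ j, ∑ k, ∫ ω, F j ω * F k ω ∂μ :=
            Finset.sum_congr rfl fun j _ =>
              integral_finset_sum _ fun k _ => hFmul j k
          rw [integral_finset_sum _ fun j _ =>
            integrable_finset_sum _ fun k _ => hFmul j k, hdd]
      _ = ((M : ℝ)⁻¹) ^ 2 * ((M : ℝ) * ((M : ℝ) * A + (b - A))) - 2 * c * I1 + c ^ 2 := by
          have hrow : ∀ j : Fin M, ∑ k, ∫ ω, F j ω * F k ω ∂μ = (M : ℝ) * A + (b - A) := by
            intro j
            have h1 : ∀ k, (∫ ω, F j ω * F k ω ∂μ) = A + (if j = k then b - A else 0) := by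
              intro k
              rw [hintFF j k]
              split_ifs <;> ring
            simp_rw [h1, Finset.sum_add_distrib, Finset.sum_const, Finset.card_univ,
              Fintype.card_fin, nsmul_eq_mul, Finset.sum_ite_eq, Finset.mem_univ, if_true]
          have hM0 : (M : ℝ) ≠ 0 := Nat.cast_ne_zero.mpr hM.ne'
          simp_rw [hrow, hint1, Finset.sum_const, Finset.card_univ, Fintype.card_fin,
            nsmul_eq_mul]
          field_simp
  rw [hLHS, hRHS]
  have hm0 : (0 : ℝ) < (M : ℝ) := by exact_mod_cast hM
  have hkey : ((M : ℝ)⁻¹) ^ 2 * ((M : ℝ) * ((M : ℝ) * A + (b - A)))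
      = A + (b - A) / (M : ℝ) := by
    field_simp
  rw [hkey]
  have : 0 ≤ (b - A) / (M : ℝ) := div_nonneg (by linarith) hm0.le
  linarith
end

section
/- For all real numbers a and b, the Lebesgue measure of the set {t ∈ [0,1] : ⌊a + t⌋ = ⌊b + t⌋} equals max(0, 1 − |a − b|). In particular, for an integer k ≥ 2 and x, y ∈ [0,1], if T is uniformly distributed on [0,1] then the probability that x and y lie in the same cell of the toy partition with offset T (i.e., that ⌊kx + T⌋ = ⌊ky + T⌋) equals max(0, 1 − k|x − y|). -/
open MeasureTheory

lemma floor_eq_iff_fract (a b t : ℝ) (hab : a ≤ b) :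
    ⌊a + t⌋ = ⌊b + t⌋ ↔ b - a ≤ Int.fract (b + t) := by
  constructor
  · intro h
    have h1 : (⌊a + t⌋ : ℝ) ≤ a + t := Int.floor_le _
    have h2 : Int.fract (b + t) = b + t - ⌊b + t⌋ := rfl
    rw [← h] at h2
    push_cast at h2
    linarith
  · intro h
    have h2 : Int.fract (b + t) = b + t - ⌊b + t⌋ := rfl
    have h1 : (⌊b + t⌋ : ℝ) ≤ a + t := by linarith
    have h3 : ⌊b + t⌋ ≤ ⌊a + t⌋ := Int.le_floor.2 h1
    have h4 : ⌊a + t⌋ ≤ ⌊b + t⌋ := Int.floor_le_floor (by linarith)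
    omega

lemma key_case (a b : ℝ) (hab : a ≤ b) (hd : b - a < 1) :
    volume {t ∈ Set.Icc (0 : ℝ) 1 | ⌊a + t⌋ = ⌊b + t⌋}
      = ENNReal.ofReal (1 - (b - a)) := by
  set d := b - a with hdef
  set u := Int.fract b with hudef
  have hu0 : 0 ≤ u := Int.fract_nonneg b
  have hu1 : u < 1 := Int.fract_lt_one b
  have hd0 : 0 ≤ d := sub_nonneg.2 hab
  -- reduce Icc to Ico
  have hIco : volume {t ∈ Set.Icc (0 : ℝ) 1 | ⌊a + t⌋ = ⌊b + t⌋}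
      = volume {t ∈ Set.Ico (0 : ℝ) 1 | ⌊a + t⌋ = ⌊b + t⌋} := by
    apply le_antisymm
    · calc volume {t ∈ Set.Icc (0 : ℝ) 1 | ⌊a + t⌋ = ⌊b + t⌋}
          ≤ volume ({t ∈ Set.Ico (0 : ℝ) 1 | ⌊a + t⌋ = ⌊b + t⌋} ∪ {1}) := by
            apply measure_mono
            rintro t ⟨⟨h0, h1⟩, heq⟩
            rcases lt_or_eq_of_le h1 with h | h
            · exact Or.inl ⟨⟨h0, h⟩, heq⟩
            · exact Or.inr h
        _ ≤ volume {t ∈ Set.Ico (0 : ℝ) 1 | ⌊a + t⌋ = ⌊b + t⌋} + volume ({1} : Set ℝ) :=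
            measure_union_le _ _
        _ = volume {t ∈ Set.Ico (0 : ℝ) 1 | ⌊a + t⌋ = ⌊b + t⌋} := by simp
    · exact measure_mono (fun t ht => ⟨Set.Ico_subset_Icc_self ht.1, ht.2⟩)
  -- value of fract (b + t) for t ∈ [0,1)
  have hfrval : ∀ t : ℝ, 0 ≤ t → t < 1 →
      Int.fract (b + t) = if u + t < 1 then u + t else u + t - 1 := by
    intro t h0 h1
    have hb : b + t = (⌊b⌋ : ℝ) + (u + t) := by
      rw [hudef]; unfold Int.fract; ring
    rw [hb, Int.fract_intCast_add]
    split_ifs with h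
    · exact Int.fract_eq_self.2 ⟨by linarith, h⟩
    · push_neg at h
      have : u + t - 1 = u + t + (-1 : ℤ) := by push_cast; ring
      rw [← Int.fract_add_intCast (u + t) (-1), ← this]
      exact Int.fract_eq_self.2 ⟨by linarith, by linarith⟩
  -- characterization of the set
  have hset : {t ∈ Set.Ico (0 : ℝ) 1 | ⌊a + t⌋ = ⌊b + t⌋}
      = Set.Ico (max 0 (d - u)) (1 - u) ∪ Set.Ico (1 + d - u) 1 := by
    ext t
    constructor
    · rintro ⟨⟨h0, h1⟩, heq⟩
      have hle := (floor_eq_iff_fract a b t hab).1 heq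
      rw [hfrval t h0 h1] at hle
      split_ifs at hle with h
      · exact Or.inl ⟨max_le h0 (by linarith), by linarith⟩
      · push_neg at h
        exact Or.inr ⟨by linarith, h1⟩
    · rintro (⟨hlo, hhi⟩ | ⟨hlo, hhi⟩)
      · have h0 : 0 ≤ t := le_trans (le_max_left _ _) hlo
        have hdu : d - u ≤ t := le_trans (le_max_right _ _) hlo
        have h1 : t < 1 := by linarith
        refine ⟨⟨h0, h1⟩, (floor_eq_iff_fract a b t hab).2 ?_⟩
        rw [hfrval t h0 h1, if_pos (by linarith)]
        linarith
      · have h0 : 0 ≤ t := by linarith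
        refine ⟨⟨h0, hhi⟩, (floor_eq_iff_fract a b t hab).2 ?_⟩
        rw [hfrval t h0 hhi, if_neg (by push_neg; linarith)]
        linarith
  rw [hIco, hset]
  have hdisj : Disjoint (Set.Ico (max 0 (d - u)) (1 - u)) (Set.Ico (1 + d - u) 1) := by
    rw [Set.disjoint_left]
    rintro t ⟨_, h1⟩ ⟨h2, _⟩
    linarith
  rw [measure_union hdisj measurableSet_Ico, Real.volume_Ico, Real.volume_Ico]
  rcases le_total d u with h | h
  · rw [max_eq_left (by linarith : d - u ≤ 0)]
    rw [← ENNReal.ofReal_add (by linarith) (by linarith)]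
    congr 1; ring
  · rw [max_eq_right (by linarith : (0 : ℝ) ≤ d - u)]
    have : (1 : ℝ) - (1 + d - u) ≤ 0 := by linarith
    rw [ENNReal.ofReal_eq_zero.2 this, add_zero]
    congr 1; ring

lemma part1 (a b : ℝ) :
    volume {t ∈ Set.Icc (0 : ℝ) 1 | ⌊a + t⌋ = ⌊b + t⌋}
      = ENNReal.ofReal (max 0 (1 - |a - b|)) := by
  wlog hab : a ≤ b with H
  · push_neg at hab
    rw [abs_sub_comm, ← H b a hab.le]
    congr 1
    ext t
    exact and_congr_right fun _ => eq_comm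
  rw [abs_of_nonpos (by linarith : a - b ≤ 0), neg_sub]
  rcases lt_or_ge (b - a) 1 with h | h
  · rw [key_case a b hab h, max_eq_right (by linarith : (0 : ℝ) ≤ 1 - (b - a))]
  · have hempty : {t ∈ Set.Icc (0 : ℝ) 1 | ⌊a + t⌋ = ⌊b + t⌋} = ∅ := by
      ext t
      simp only [Set.mem_setOf_eq, Set.mem_empty_iff_false, iff_false, not_and]
      intro _ heq
      have h1 : a + t + 1 ≤ b + t := by linarith
      have h2 : ⌊a + t + 1⌋ ≤ ⌊b + t⌋ := Int.floor_le_floor h1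
      rw [Int.floor_add_one] at h2
      omega
    rw [hempty, measure_empty, max_eq_left (by linarith : 1 - (b - a) ≤ 0),
      ENNReal.ofReal_zero]

/-- For all reals `a, b`, the Lebesgue measure of `{t ∈ [0,1] : ⌊a+t⌋ = ⌊b+t⌋}` is
`max 0 (1 − |a − b|)`. In particular, for `k ≥ 2`, `x, y ∈ [0,1]` and `T` uniform
on `[0,1]`, the probability that `x` and `y` lie in the same cell of the toy
partition with offset `T` (i.e. `⌊kx + T⌋ = ⌊ky + T⌋`) is `max 0 (1 − k|x − y|)`. -/
theorem toy_partition_same_cell_probability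
    (a b : ℝ) (k : ℕ) (hk : 2 ≤ k) (x y : ℝ)
    (hx : x ∈ Set.Icc (0 : ℝ) 1) (hy : y ∈ Set.Icc (0 : ℝ) 1)
    {Ω : Type*} [MeasurableSpace Ω] (μ : Measure Ω) [IsProbabilityMeasure μ]
    (T : Ω → ℝ) (hT : Measurable T)
    (hTunif : Measure.map T μ = volume.restrict (Set.Icc (0 : ℝ) 1)) :
    volume {t ∈ Set.Icc (0 : ℝ) 1 | ⌊a + t⌋ = ⌊b + t⌋}
        = ENNReal.ofReal (max 0 (1 - |a - b|)) ∧
      μ {ω | ⌊(k : ℝ) * x + T ω⌋ = ⌊(k : ℝ) * y + T ω⌋}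
        = ENNReal.ofReal (max 0 (1 - k * |x - y|)) := by
  refine ⟨part1 a b, ?_⟩
  have hmeas : MeasurableSet {t : ℝ | ⌊(k : ℝ) * x + t⌋ = ⌊(k : ℝ) * y + t⌋} := by
    have h1 : Measurable fun t : ℝ => ⌊(k : ℝ) * x + t⌋ :=
      Int.measurable_floor.comp (measurable_const.add measurable_id)
    have h2 : Measurable fun t : ℝ => ⌊(k : ℝ) * y + t⌋ :=
      Int.measurable_floor.comp (measurable_const.add measurable_id)
    exact measurableSet_eq_fun h1 h2
  have hpre : μ {ω | ⌊(k : ℝ) * x + T ω⌋ = ⌊(k : ℝ) * y + T ω⌋}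
      = Measure.map T μ {t : ℝ | ⌊(k : ℝ) * x + t⌋ = ⌊(k : ℝ) * y + t⌋} :=
    (Measure.map_apply hT hmeas).symm
  rw [hpre, hTunif, Measure.restrict_apply hmeas]
  have hsets : {t : ℝ | ⌊(k : ℝ) * x + t⌋ = ⌊(k : ℝ) * y + t⌋} ∩ Set.Icc 0 1
      = {t ∈ Set.Icc (0 : ℝ) 1 | ⌊(k : ℝ) * x + t⌋ = ⌊(k : ℝ) * y + t⌋} := by
    ext t; exact and_comm
  rw [hsets, part1 ((k : ℝ) * x) ((k : ℝ) * y)]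
  congr 2
  rw [← mul_sub, abs_mul, abs_of_nonneg (by positivity : (0 : ℝ) ≤ (k : ℝ))]
end

section
/- Let k ≥ 2, a, n, M be positive integers with a ≤ n, and let x ∈ [1/k, 1 − 1/k]. On a probability space, let X, U_1,…,U_M be independent random variables, each uniformly distributed on [0,1]. Set q := max(0, 1 − k|X − x|), B_j := 1_{{U_j ≤ (a/n)·q}} for j = 1,…,M, and W̃ := (k/(aM)) Σ_{j=1}^M B_j. Then E[W̃²] = (k/(na)) · [ (1 − 1/M)·(2a)/(3n) + 1/M ]. -/
open MeasureTheory ProbabilityTheory intervalIntegral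


lemma aux0 (k : ℝ) (hk : 0 < k) (p : ℕ) :
    ∫ u in (0:ℝ)..(1/k), (1 - k*u)^p = 1/((p+1)*k) := by
  have h : (fun u : ℝ => (1 - k*u)^p) = fun u => (fun w : ℝ => (1-w)^p) (k*u) := rfl
  rw [h, intervalIntegral.integral_comp_mul_left (fun w : ℝ => (1-w)^p) hk.ne',
    mul_zero, mul_one_div_cancel hk.ne',
    show (fun w : ℝ => (1-w)^p) = fun w => (fun y : ℝ => y^p) (1-w) from rfl,
    intervalIntegral.integral_comp_sub_left (fun y : ℝ => y^p) 1]
  simp [integral_pow]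

lemma aux1 (k : ℝ) (hk : 0 < k) (p : ℕ) :
    ∫ u in (-(1/k))..(1/k), (1 - k*|u|)^p = 2/((p+1)*k) := by
  have hc : (0:ℝ) ≤ 1/k := by positivity
  have hcont : ∀ a b : ℝ, IntervalIntegrable (fun u : ℝ => (1 - k*|u|)^p) volume a b :=
    fun a b => (Continuous.pow (by continuity) p).intervalIntegrable a b
  have hsplit := intervalIntegral.integral_add_adjacent_intervals (a := -(1/k)) (b := 0)
    (c := 1/k) (hcont _ _) (hcont _ _)
  have hneg : ∫ u in (-(1/k))..(0:ℝ), (1 - k*|u|)^p = ∫ u in (0:ℝ)..(1/k), (1 - k*|u|)^p := by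
    have h2 := intervalIntegral.integral_comp_neg (a := (0:ℝ)) (b := 1/k)
      (fun u : ℝ => (1 - k*|u|)^p)
    simp only [abs_neg, neg_zero] at h2
    exact h2.symm
  have hpos : ∫ u in (0:ℝ)..(1/k), (1 - k*|u|)^p = ∫ u in (0:ℝ)..(1/k), (1 - k*u)^p := by
    apply intervalIntegral.integral_congr
    intro u hu
    rw [Set.uIcc_of_le hc] at hu
    simp only [abs_of_nonneg hu.1]
  rw [← hsplit, hneg, hpos, aux0 k hk p]
  ring

lemma tent (k : ℝ) (hk : 0 < k) (x : ℝ) (hx1 : 1/k ≤ x) (hx2 : x ≤ 1 - 1/k)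
    (p : ℕ) (hp : p ≠ 0) :
    ∫ t in Set.Icc (0:ℝ) 1, (max 0 (1 - k*|t - x|))^p ∂volume = 2/((p+1)*k) := by
  set f : ℝ → ℝ := fun t => (max 0 (1 - k*|t - x|))^p with hf
  have hc : (0:ℝ) < 1/k := by positivity
  have hI : Set.Icc (x - 1/k) (x + 1/k) ⊆ Set.Icc (0:ℝ) 1 := by
    apply Set.Icc_subset_Icc <;> linarith
  have hfc : Continuous f := by
    apply Continuous.pow
    exact continuous_const.max (by continuity)
  have hint : IntegrableOn f (Set.Icc (0:ℝ) 1) volume :=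
    hfc.integrableOn_Icc
  have key := MeasureTheory.integral_inter_add_diff (μ := volume)
    (s := Set.Icc (0:ℝ) 1) (t := Set.Icc (x - 1/k) (x + 1/k))
    (f := f) measurableSet_Icc hint
  rw [Set.inter_eq_right.mpr hI] at key
  have hzero : ∫ t in Set.Icc (0:ℝ) 1 \ Set.Icc (x - 1/k) (x + 1/k), f t ∂volume = 0 := by
    rw [MeasureTheory.setIntegral_congr_fun (measurableSet_Icc.diff measurableSet_Icc)
      (g := fun _ => (0:ℝ)) ?_, MeasureTheory.integral_zero]
    intro t ht
    have h1 : ¬ (x - 1/k ≤ t ∧ t ≤ x + 1/k) := by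
      intro h; exact ht.2 ⟨h.1, h.2⟩
    have h2 : 1/k ≤ |t - x| := by
      rcases abs_cases (t - x) with ⟨he, _⟩ | ⟨he, _⟩ <;> rw [he] <;>
        rcases not_and_or.mp h1 with h | h <;> push_neg at h <;> linarith
    have h3 : 1 - k*|t - x| ≤ 0 := by
      have : 1 ≤ k * |t - x| := by
        calc (1:ℝ) = k * (1/k) := by field_simp
        _ ≤ k * |t - x| := by nlinarith
      linarith
    simp only [f, max_eq_left h3, zero_pow hp]
  have hIcc : ∫ t in Set.Icc (x - 1/k) (x + 1/k), f t ∂volume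
      = ∫ t in (x - 1/k)..(x + 1/k), f t := by
    rw [intervalIntegral.integral_of_le (by linarith), MeasureTheory.integral_Icc_eq_integral_Ioc]
  have hcongr : ∫ t in (x - 1/k)..(x + 1/k), f t
      = ∫ t in (x - 1/k)..(x + 1/k), (1 - k*|t - x|)^p := by
    apply intervalIntegral.integral_congr
    intro t ht
    rw [Set.uIcc_of_le (by linarith)] at ht
    have : 0 ≤ 1 - k*|t - x| := by
      have h2 : |t - x| ≤ 1/k := by
        rw [abs_le]; constructor <;> [linarith [ht.1]; linarith [ht.2]]
      have hk1 : k * (1/k) = 1 := by field_simp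
      nlinarith [mul_le_mul_of_nonneg_left h2 hk.le]
    simp only [f, max_eq_right this]
  have hshift : ∫ t in (x - 1/k)..(x + 1/k), (1 - k*|t - x|)^p
      = ∫ u in (-(1/k))..(1/k), (1 - k*|u|)^p := by
    have := intervalIntegral.integral_comp_sub_right (a := x - 1/k) (b := x + 1/k)
      (fun u : ℝ => (1 - k*|u|)^p) x
    simpa using this
  rw [← key, hzero, add_zero, hIcc, hcongr, hshift, aux1 k hk p]

lemma unif_if (c : ℝ) (h0 : 0 ≤ c) (h1 : c ≤ 1) :
    ∫ u, (if u ≤ c then (1:ℝ) else 0) ∂(volume.restrict (Set.Icc 0 1)) = c := by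
  have he : (fun u : ℝ => if u ≤ c then (1:ℝ) else 0)
      = (Set.Iic c).indicator (fun _ => 1) := by
    funext u; by_cases h : u ≤ c <;> simp [Set.indicator, Set.mem_Iic, h]
  rw [he, MeasureTheory.integral_indicator measurableSet_Iic]
  simp only [MeasureTheory.setIntegral_const, smul_eq_mul, mul_one]
  rw [measureReal_def, Measure.restrict_apply measurableSet_Iic]
  have hs : Set.Iic c ∩ Set.Icc (0:ℝ) 1 = Set.Icc 0 c := by
    ext u
    simp only [Set.mem_inter_iff, Set.mem_Iic, Set.mem_Icc]
    constructor
    · rintro ⟨h2, h3, h4⟩; exact ⟨h3, h2⟩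
    · rintro ⟨h2, h3⟩; exact ⟨h3, h2, h3.trans h1⟩
  rw [hs, Real.volume_Icc, ENNReal.toReal_ofReal (by linarith)]
  ring

/-- Second moment of the approximated toy-forest weight: with `X, U₁, …, U_M`
independent uniforms on `[0,1]`, `k ≥ 2`, `a ≤ n`, `x ∈ [1/k, 1 − 1/k]`,
`q = max 0 (1 − k|X − x|)`, `Bⱼ = 1_{Uⱼ ≤ (a/n)q}` and `W̃ = (k/(aM)) Σⱼ Bⱼ`,
one has `E[W̃²] = (k/(na)) ((1 − 1/M)(2a)/(3n) + 1/M)`. -/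
theorem toy_weight_second_moment
    (k a n M : ℕ) (hk : 2 ≤ k) (ha : 0 < a) (han : a ≤ n) (hM : 0 < M)
    (x : ℝ) (hx : x ∈ Set.Icc (1 / (k : ℝ)) (1 - 1 / (k : ℝ)))
    {Ω : Type*} [MeasurableSpace Ω] (μ : Measure Ω) [IsProbabilityMeasure μ]
    (X : Ω → ℝ) (U : Fin M → Ω → ℝ)
    (hXm : Measurable X) (hUm : ∀ j, Measurable (U j))
    (hindep : iIndepFun
      (Fin.cons (α := fun _ : Fin (M + 1) => Ω → ℝ) X U) μ)
    (hXunif : Measure.map X μ = volume.restrict (Set.Icc (0 : ℝ) 1))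
    (hUunif : ∀ j, Measure.map (U j) μ = volume.restrict (Set.Icc (0 : ℝ) 1))
    (q : Ω → ℝ) (hq : q = fun ω => max 0 (1 - k * |X ω - x|))
    (B : Fin M → Ω → ℝ)
    (hB : B = fun j ω => if U j ω ≤ ((a : ℝ) / n) * q ω then 1 else 0)
    (W : Ω → ℝ) (hW : W = fun ω => ((k : ℝ) / (a * M)) * ∑ j, B j ω) :
    ∫ ω, W ω ^ 2 ∂μ
      = ((k : ℝ) / (n * a)) *
          ((1 - 1 / (M : ℝ)) * (2 * a) / (3 * n) + 1 / (M : ℝ)) := by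
  -- basic positivity
  have hn : 0 < n := lt_of_lt_of_le ha han
  have hkR : (0:ℝ) < k := by exact_mod_cast (by omega : 0 < k)
  have haR : (0:ℝ) < a := by exact_mod_cast ha
  have hnR : (0:ℝ) < n := by exact_mod_cast hn
  have hMR : (0:ℝ) < M := by exact_mod_cast hM
  have hanR : (a:ℝ) ≤ n := by exact_mod_cast han
  set ν : Measure ℝ := volume.restrict (Set.Icc (0:ℝ) 1) with hν
  have hνprob : IsProbabilityMeasure ν := by
    constructor
    rw [hν, Measure.restrict_apply_univ, Real.volume_Icc]
    norm_num
  set g : ℝ → ℝ := fun t => ((a:ℝ)/n) * max 0 (1 - k*|t - x|) with hg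
  have hgm : Measurable g := by
    apply Measurable.const_mul
    exact measurable_const.max
      (measurable_const.sub (((measurable_id.sub measurable_const).abs).const_mul (k:ℝ)))
  have hg0 : ∀ t, 0 ≤ g t := fun t => mul_nonneg (by positivity) (le_max_left _ _)
  have hg1 : ∀ t, g t ≤ 1 := by
    intro t
    have h1 : ((a:ℝ)/n) ≤ 1 := by rw [div_le_one hnR]; exact hanR
    have h2 : max 0 (1 - (k:ℝ)*|t - x|) ≤ 1 := by
      apply max_le (by norm_num)
      have : 0 ≤ (k:ℝ)*|t - x| := by positivity
      linarith
    calc g t ≤ 1 * 1 := mul_le_mul h1 h2 (le_max_left _ _) (by norm_num)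
    _ = 1 := by norm_num
  -- the indicator kernel
  set φ : ℝ × ℝ → ℝ := fun p => if p.2 ≤ g p.1 then 1 else 0 with hφ
  have hS1 : MeasurableSet {p : ℝ × ℝ | p.2 ≤ g p.1} :=
    measurableSet_le measurable_snd (hgm.comp measurable_fst)
  have hφm : Measurable φ := Measurable.ite hS1 measurable_const measurable_const
  have hφint : Integrable φ (ν.prod ν) := by
    have he : φ = Set.indicator {p : ℝ × ℝ | p.2 ≤ g p.1} (fun _ => (1:ℝ)) := by
      funext p
      by_cases h : p.2 ≤ g p.1 <;> simp [hφ, Set.indicator, h]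
    rw [he, integrable_indicator_iff hS1]
    exact integrableOn_const (measure_ne_top _ _)
  have hinner : ∀ t : ℝ, ∫ u, φ (t, u) ∂ν = g t := fun t => unif_if (g t) (hg0 t) (hg1 t)
  -- independence consequences
  have hmeascons : ∀ i, Measurable (Fin.cons (α := fun _ : Fin (M + 1) => Ω → ℝ) X U i) := by
    intro i
    refine Fin.cases ?_ ?_ i
    · simpa using hXm
    · intro j; simpa using hUm j
  have hXU : ∀ j : Fin M, IndepFun X (U j) μ := by
    intro j
    have h := hindep.indepFun (i := 0) (j := j.succ) (Fin.succ_ne_zero j).symm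
    simpa using h
  have hUU : ∀ j l : Fin M, j ≠ l → IndepFun (U j) (U l) μ := by
    intro j l hjl
    have h := hindep.indepFun (i := j.succ) (j := l.succ) (by simpa [Fin.succ_inj] using hjl)
    simpa using h
  have hXUU : ∀ j l : Fin M, IndepFun X (fun ω => (U j ω, U l ω)) μ := by
    intro j l
    have h := hindep.indepFun_prodMk hmeascons j.succ l.succ 0
      (Fin.succ_ne_zero j) (Fin.succ_ne_zero l)
    simpa using h.symm
  have hmapXU : ∀ j, Measure.map (fun ω => (X ω, U j ω)) μ = ν.prod ν := by
    intro j
    rw [(indepFun_iff_map_prod_eq_prod_map_map hXm.aemeasurable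
      (hUm j).aemeasurable).mp (hXU j), hXunif, hUunif j]
  have hmapUU : ∀ j l : Fin M, j ≠ l →
      Measure.map (fun ω => (U j ω, U l ω)) μ = ν.prod ν := by
    intro j l hjl
    rw [(indepFun_iff_map_prod_eq_prod_map_map (hUm j).aemeasurable
      (hUm l).aemeasurable).mp (hUU j l hjl), hUunif j, hUunif l]
  have hmapT : ∀ j l : Fin M, j ≠ l →
      Measure.map (fun ω => (X ω, (U j ω, U l ω))) μ = ν.prod (ν.prod ν) := by
    intro j l hjl
    rw [(indepFun_iff_map_prod_eq_prod_map_map hXm.aemeasurable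
      ((hUm j).prodMk (hUm l)).aemeasurable).mp (hXUU j l), hXunif, hmapUU j l hjl]
  -- pointwise identities
  have hBeq : ∀ (j : Fin M) ω, B j ω = φ (X ω, U j ω) := by
    intro j ω; simp only [hB, hq, hφ, hg]
  have E1 : ∀ j : Fin M, ∫ ω, B j ω ∂μ = ∫ t, g t ∂ν := by
    intro j
    calc ∫ ω, B j ω ∂μ = ∫ ω, φ (X ω, U j ω) ∂μ := by simp_rw [hBeq]
      _ = ∫ p, φ p ∂(Measure.map (fun ω => (X ω, U j ω)) μ) :=
          (integral_map (hXm.prodMk (hUm j)).aemeasurable hφm.aestronglyMeasurable).symm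
      _ = ∫ p, φ p ∂(ν.prod ν) := by rw [hmapXU j]
      _ = ∫ t, ∫ u, φ (t, u) ∂ν ∂ν := integral_prod φ hφint
      _ = ∫ t, g t ∂ν := by simp_rw [hinner]
  set ψ : ℝ × (ℝ × ℝ) → ℝ := fun p => φ (p.1, p.2.1) * φ (p.1, p.2.2) with hψ
  have hψm : Measurable ψ :=
    (hφm.comp (measurable_fst.prodMk measurable_snd.fst)).mul
      (hφm.comp (measurable_fst.prodMk measurable_snd.snd))
  have hψint : Integrable ψ (ν.prod (ν.prod ν)) := by
    have hS2 : MeasurableSet {p : ℝ × (ℝ × ℝ) | p.2.1 ≤ g p.1 ∧ p.2.2 ≤ g p.1} :=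
      (measurableSet_le measurable_snd.fst (hgm.comp measurable_fst)).inter
        (measurableSet_le measurable_snd.snd (hgm.comp measurable_fst))
    have he : ψ = Set.indicator {p : ℝ × (ℝ × ℝ) | p.2.1 ≤ g p.1 ∧ p.2.2 ≤ g p.1}
        (fun _ => (1:ℝ)) := by
      funext p
      by_cases h1 : p.2.1 ≤ g p.1 <;> by_cases h2 : p.2.2 ≤ g p.1 <;>
        simp [hψ, hφ, Set.indicator, h1, h2]
    rw [he, integrable_indicator_iff hS2]
    exact integrableOn_const (measure_ne_top _ _)
  have hBBeq : ∀ (j l : Fin M) ω, B j ω * B l ω = ψ (X ω, (U j ω, U l ω)) := by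
    intro j l ω; simp only [hB, hq, hψ, hφ, hg]
  have E2 : ∀ j l : Fin M, j ≠ l → ∫ ω, B j ω * B l ω ∂μ = ∫ t, g t ^ 2 ∂ν := by
    intro j l hjl
    calc ∫ ω, B j ω * B l ω ∂μ = ∫ ω, ψ (X ω, (U j ω, U l ω)) ∂μ := by simp_rw [hBBeq]
      _ = ∫ p, ψ p ∂(Measure.map (fun ω => (X ω, (U j ω, U l ω))) μ) :=
          (integral_map (hXm.prodMk ((hUm j).prodMk (hUm l))).aemeasurable
            hψm.aestronglyMeasurable).symm
      _ = ∫ p, ψ p ∂(ν.prod (ν.prod ν)) := by rw [hmapT j l hjl]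
      _ = ∫ t, ∫ p, ψ (t, p) ∂(ν.prod ν) ∂ν := integral_prod ψ hψint
      _ = ∫ t, g t ^ 2 ∂ν := by
          refine integral_congr_ae (Filter.Eventually.of_forall fun t => ?_)
          have h := MeasureTheory.integral_prod_mul (μ := ν) (ν := ν)
            (f := fun u => φ (t, u)) (g := fun v => φ (t, v))
          simpa [hinner t, sq] using h
  -- measurability and integrability of the B's
  have hqm : Measurable q := by
    rw [hq]
    exact measurable_const.max
      (measurable_const.sub (((hXm.sub measurable_const).abs).const_mul (k:ℝ)))
  have hBm : ∀ j, Measurable (B j) := by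
    intro j
    rw [hB]
    exact Measurable.ite (measurableSet_le (hUm j) (hqm.const_mul ((a:ℝ)/n)))
      measurable_const measurable_const
  have hBBint : ∀ j l, Integrable (fun ω => B j ω * B l ω) μ := by
    intro j l
    refine (integrable_const (1:ℝ)).mono' (((hBm j).mul (hBm l)).aestronglyMeasurable) ?_
    refine Filter.Eventually.of_forall fun ω => ?_
    simp only [hB]
    by_cases h1 : U j ω ≤ (a:ℝ)/n * q ω <;> by_cases h2 : U l ω ≤ (a:ℝ)/n * q ω <;>
      simp [h1, h2]
  have hBsq : ∀ (j : Fin M) ω, B j ω * B j ω = B j ω := by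
    intro j ω
    simp only [hB]
    by_cases h : U j ω ≤ (a:ℝ)/n * q ω <;> simp [h]
  -- the values of the two integrals
  have ht1 := tent (k:ℝ) hkR x hx.1 hx.2 1 one_ne_zero
  have ht2 := tent (k:ℝ) hkR x hx.1 hx.2 2 two_ne_zero
  simp only [pow_one] at ht1
  push_cast at ht1 ht2
  have hI1 : ∫ t, g t ∂ν = (a:ℝ)/n * (2/((1+1)*k)) := by
    simp only [hg]
    rw [MeasureTheory.integral_const_mul, hν, ht1]
  have hI2 : ∫ t, g t ^ 2 ∂ν = ((a:ℝ)/n)^2 * (2/((2+1)*k)) := by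
    simp only [hg]
    simp_rw [mul_pow]
    rw [MeasureTheory.integral_const_mul, hν, ht2]
  -- expand the square of the sum
  have key : ∫ ω, W ω ^ 2 ∂μ
      = ((k:ℝ)/(a*M))^2 * ∑ j : Fin M, ∑ l : Fin M, ∫ ω, B j ω * B l ω ∂μ := by
    have hWsq : ∀ ω, W ω ^ 2 = ((k:ℝ)/(a*M))^2 * ∑ j : Fin M, ∑ l : Fin M, B j ω * B l ω := by
      intro ω
      rw [hW, mul_pow, pow_two (∑ j : Fin M, B j ω), Finset.sum_mul_sum]
    simp_rw [hWsq]
    rw [MeasureTheory.integral_const_mul]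
    congr 1
    rw [MeasureTheory.integral_finset_sum _
      (fun j _ => integrable_finset_sum _ (fun l _ => hBBint j l))]
    exact Finset.sum_congr rfl fun j _ =>
      MeasureTheory.integral_finset_sum _ (fun l _ => hBBint j l)
  have hcell : ∀ j l : Fin M, ∫ ω, B j ω * B l ω ∂μ
      = if j = l then (a:ℝ)/n * (2/((1+1)*k)) else ((a:ℝ)/n)^2 * (2/((2+1)*k)) := by
    intro j l
    by_cases h : j = l
    · subst h
      rw [if_pos rfl, ← hI1]
      simp_rw [hBsq j]
      exact E1 j
    · rw [if_neg h, ← hI2]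
      exact E2 j l h
  have hrow : ∀ j : Fin M,
      ∑ l : Fin M, (if j = l then (a:ℝ)/n * (2/((1+1)*k)) else ((a:ℝ)/n)^2 * (2/((2+1)*k)))
      = (a:ℝ)/n * (2/((1+1)*k))
        + ((M:ℝ) - 1) * (((a:ℝ)/n)^2 * (2/((2+1)*k))) := by
    intro j
    set A := (a:ℝ)/n * (2/((1+1)*k)) with hA
    set C := ((a:ℝ)/n)^2 * (2/((2+1)*k)) with hC
    have h1 : ∀ l : Fin M, (if j = l then A else C) = (if j = l then A - C else 0) + C := by
      intro l; by_cases h : j = l <;> simp [h]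
    simp_rw [h1]
    rw [Finset.sum_add_distrib, Finset.sum_ite_eq, if_pos (Finset.mem_univ j),
      Finset.sum_const, Finset.card_univ, Fintype.card_fin, nsmul_eq_mul]
    ring
  rw [key]
  simp_rw [hcell, hrow, Finset.sum_const, Finset.card_univ, Fintype.card_fin, nsmul_eq_mul]
  have hkne : (k:ℝ) ≠ 0 := hkR.ne'
  have hane : (a:ℝ) ≠ 0 := haR.ne'
  have hnne : (n:ℝ) ≠ 0 := hnR.ne'
  have hMne : (M:ℝ) ≠ 0 := hMR.ne'
  field_simp
  ring
end

section
/- Let k ≥ 2, a, n, M be positive integers with a ≤ n, and let x ∈ [1/k, 1 − 1/k]. On a probability space, let X_1,…,X_n and (U_{ij})_{1≤i≤n, 1≤j≤M} be independent random variables, each uniformly distributed on [0,1]. For each i set q_i := max(0, 1 − k|X_i − x|), B_{ij} := 1_{{U_{ij} ≤ (a/n)·q_i}}, and W̃_i := (k/(aM)) Σ_{j=1}^M B_{ij}. Then E[Σ_{i=1}^n W̃_i²] = (k/a) · [ (1 − 1/M)·(2a)/(3n) + 1/M ]. In particular this equals k/a when M = 1, and converges to 2k/(3n) as M → ∞. 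-/
open MeasureTheory ProbabilityTheory Filter

lemma unif_cdf (t : ℝ) (h0 : 0 ≤ t) (h1 : t ≤ 1) :
    ∫ u, (if u ≤ t then (1:ℝ) else 0) ∂(volume.restrict (Set.Icc (0:ℝ) 1)) = t := by
  have : (fun u : ℝ => if u ≤ t then (1:ℝ) else 0)
      = Set.indicator (Set.Iic t) (fun _ => (1:ℝ)) := by
    ext u; simp [Set.indicator_apply, Set.mem_Iic]
  rw [this, integral_indicator measurableSet_Iic, setIntegral_const,
    Measure.real_def, Measure.restrict_apply measurableSet_Iic]
  have hs : Set.Iic t ∩ Set.Icc (0:ℝ) 1 = Set.Icc 0 t := by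
    ext u; simp only [Set.mem_inter_iff, Set.mem_Iic, Set.mem_Icc]
    constructor
    · rintro ⟨h, h', _⟩; exact ⟨h', h⟩
    · rintro ⟨h', h⟩; exact ⟨h, h', h.trans h1⟩
  rw [hs]
  rw [Real.volume_Icc]
  rw [ENNReal.toReal_ofReal (by linarith : (0:ℝ) ≤ t - 0)]
  simp

lemma tri_split (k : ℕ) (hk : 2 ≤ k) (x : ℝ)
    (hx1 : 1/(k:ℝ) ≤ x) (hx2 : x ≤ 1 - 1/(k:ℝ)) (m : ℕ) (hm : 0 < m) :
    ∫ s in Set.Icc (0:ℝ) 1, (max 0 (1 - (k:ℝ)*|s-x|))^m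
      = 2 * ∫ t in (0:ℝ)..(1/(k:ℝ)), (1-(k:ℝ)*t)^m := by
  have hk0 : (0:ℝ) < k := by positivity
  have hik : (0:ℝ) < 1/(k:ℝ) := by positivity
  set T : ℝ → ℝ := fun s => (max 0 (1 - (k:ℝ)*|s-x|))^m with hT
  have hTc : Continuous T := by
    apply Continuous.pow
    exact continuous_const.max
      (continuous_const.sub (continuous_const.mul (continuous_id.sub continuous_const).abs))
  have h0 : (0:ℝ) ≤ x - 1/(k:ℝ) := by linarith
  have h1 : x + 1/(k:ℝ) ≤ 1 := by linarith
  have hint : ∀ a b : ℝ, IntervalIntegrable T volume a b := fun a b =>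
    hTc.intervalIntegrable a b
  have key : ∫ s in Set.Icc (0:ℝ) 1, T s = ∫ s in (0:ℝ)..1, T s := by
    rw [intervalIntegral.integral_of_le (by norm_num), integral_Icc_eq_integral_Ioc]
  rw [key]
  rw [← intervalIntegral.integral_add_adjacent_intervals (b := x - 1/(k:ℝ))
    (hint _ _) (hint _ _),
    ← intervalIntegral.integral_add_adjacent_intervals (a := x - 1/(k:ℝ)) (b := x + 1/(k:ℝ))
    (hint _ _) (hint _ _),
    ← intervalIntegral.integral_add_adjacent_intervals (a := x - 1/(k:ℝ)) (b := x)
    (hint _ _) (hint _ _)]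
  have hleft0 : ∫ s in (0:ℝ)..(x - 1/(k:ℝ)), T s = 0 := by
    rw [intervalIntegral.integral_congr (g := fun _ => (0:ℝ))]
    · simp
    · intro s hs
      rw [Set.uIcc_of_le h0] at hs
      have hs2 : s ≤ x - 1/(k:ℝ) := hs.2
      have : (1:ℝ) - (k:ℝ)*|s-x| ≤ 0 := by
        have : 1/(k:ℝ) ≤ |s - x| := by
          rw [abs_sub_comm, abs_of_nonneg (by linarith)]; linarith
        have := mul_le_mul_of_nonneg_left this (le_of_lt hk0)
        rw [mul_one_div] at this
        have hkk : (1:ℝ) ≤ (k:ℝ)*|s-x| := by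
          calc (1:ℝ) = (k:ℝ)/(k:ℝ) := by field_simp
          _ ≤ _ := this
        linarith
      simp [hT, max_eq_left this, zero_pow hm.ne']
  have hright0 : ∫ s in (x + 1/(k:ℝ))..1, T s = 0 := by
    rw [intervalIntegral.integral_congr (g := fun _ => (0:ℝ))]
    · simp
    · intro s hs
      rw [Set.uIcc_of_le h1] at hs
      have hs2 : x + 1/(k:ℝ) ≤ s := hs.1
      have : (1:ℝ) - (k:ℝ)*|s-x| ≤ 0 := by
        have h' : 1/(k:ℝ) ≤ |s - x| := by
          rw [abs_of_nonneg (by linarith)]; linarith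
        have := mul_le_mul_of_nonneg_left h' (le_of_lt hk0)
        rw [mul_one_div] at this
        have hkk : (1:ℝ) ≤ (k:ℝ)*|s-x| := by
          calc (1:ℝ) = (k:ℝ)/(k:ℝ) := by field_simp
          _ ≤ _ := this
        linarith
      simp [hT, max_eq_left this, zero_pow hm.ne']
  have hmidL : ∫ s in (x - 1/(k:ℝ))..x, T s = ∫ t in (0:ℝ)..(1/(k:ℝ)), (1-(k:ℝ)*t)^m := by
    have : ∫ s in (x - 1/(k:ℝ))..x, T s
        = ∫ s in (x - 1/(k:ℝ))..x, (1-(k:ℝ)*(x - s))^m := by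
      apply intervalIntegral.integral_congr
      intro s hs
      rw [Set.uIcc_of_le (by linarith)] at hs
      have h1' : x - s ≤ 1/(k:ℝ) := by linarith [hs.1]
      have h2' : 0 ≤ x - s := by linarith [hs.2]
      have habs : |s - x| = x - s := by rw [abs_sub_comm, abs_of_nonneg h2']
      have hnn : (0:ℝ) ≤ 1 - (k:ℝ)*(x-s) := by
        have := mul_le_mul_of_nonneg_left h1' (le_of_lt hk0)
        rw [mul_one_div] at this
        have : (k:ℝ)*(x-s) ≤ 1 := by
          calc (k:ℝ)*(x-s) ≤ (k:ℝ)/(k:ℝ) := this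
          _ = 1 := by field_simp
        linarith
      simp [hT, habs, max_eq_right hnn]
    rw [this, intervalIntegral.integral_comp_sub_left (fun t => (1-(k:ℝ)*t)^m) x]
    norm_num
  have hmidR : ∫ s in x..(x + 1/(k:ℝ)), T s = ∫ t in (0:ℝ)..(1/(k:ℝ)), (1-(k:ℝ)*t)^m := by
    have : ∫ s in x..(x + 1/(k:ℝ)), T s
        = ∫ s in x..(x + 1/(k:ℝ)), (1-(k:ℝ)*(s - x))^m := by
      apply intervalIntegral.integral_congr
      intro s hs
      rw [Set.uIcc_of_le (by linarith)] at hs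
      have h1' : s - x ≤ 1/(k:ℝ) := by linarith [hs.2]
      have h2' : 0 ≤ s - x := by linarith [hs.1]
      have habs : |s - x| = s - x := abs_of_nonneg h2'
      have hnn : (0:ℝ) ≤ 1 - (k:ℝ)*(s-x) := by
        have := mul_le_mul_of_nonneg_left h1' (le_of_lt hk0)
        rw [mul_one_div] at this
        have : (k:ℝ)*(s-x) ≤ 1 := by
          calc (k:ℝ)*(s-x) ≤ (k:ℝ)/(k:ℝ) := this
          _ = 1 := by field_simp
        linarith
      simp [hT, habs, max_eq_right hnn]
    rw [this, intervalIntegral.integral_comp_sub_right (fun t => (1-(k:ℝ)*t)^m) x]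
    norm_num
  rw [hleft0, hright0, hmidL, hmidR]; ring

lemma poly_int1 (k : ℕ) (hk : 2 ≤ k) :
    ∫ t in (0:ℝ)..(1/(k:ℝ)), (1-(k:ℝ)*t)^1 = 1/(2*(k:ℝ)) := by
  have hk0 : (0:ℝ) < k := by positivity
  have hderiv : ∀ t ∈ Set.uIcc (0:ℝ) (1/(k:ℝ)),
      HasDerivAt (fun t : ℝ => t - (k:ℝ)*t^2/2) ((1-(k:ℝ)*t)^1) t := by
    intro t _
    have h := (hasDerivAt_id t).sub (((hasDerivAt_pow 2 t).const_mul (k:ℝ)).div_const 2)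
    refine h.congr_deriv ?_
    norm_num
    ring
  rw [intervalIntegral.integral_eq_sub_of_hasDerivAt hderiv
    ((by fun_prop : Continuous fun t : ℝ => (1-(k:ℝ)*t)^1).intervalIntegrable 0 (1/(k:ℝ)))]
  field_simp
  ring

lemma poly_int2 (k : ℕ) (hk : 2 ≤ k) :
    ∫ t in (0:ℝ)..(1/(k:ℝ)), (1-(k:ℝ)*t)^2 = 1/(3*(k:ℝ)) := by
  have hk0 : (0:ℝ) < k := by positivity
  have hderiv : ∀ t ∈ Set.uIcc (0:ℝ) (1/(k:ℝ)),
      HasDerivAt (fun t : ℝ => t - (k:ℝ)*t^2 + (k:ℝ)^2*t^3/3) ((1-(k:ℝ)*t)^2) t := by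
    intro t _
    have h := (((hasDerivAt_id t).sub ((hasDerivAt_pow 2 t).const_mul (k:ℝ))).add
      (((hasDerivAt_pow 3 t).const_mul ((k:ℝ)^2)).div_const 3))
    refine h.congr_deriv ?_
    norm_num
    ring
  rw [intervalIntegral.integral_eq_sub_of_hasDerivAt hderiv
    ((by fun_prop : Continuous fun t : ℝ => (1-(k:ℝ)*t)^2).intervalIntegrable 0 (1/(k:ℝ)))]
  field_simp
  ring

/-- Estimation-error sum for the toy forest: with `X₁, …, Xₙ` and `(U_{ij})`
independent uniforms on `[0,1]`, `qᵢ = max 0 (1 − k|Xᵢ − x|)`,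
`B_{ij} = 1_{U_{ij} ≤ (a/n)qᵢ}` and `W̃ᵢ = (k/(aM)) Σⱼ B_{ij}`, one has
`E[Σᵢ W̃ᵢ²] = (k/a) ((1 − 1/M)(2a)/(3n) + 1/M)`; in particular this equals
`k/a` when `M = 1`, and the formula converges to `2k/(3n)` as `M → ∞`. -/
theorem toy_forest_estimation_error_sum
    (k a n M : ℕ) (hk : 2 ≤ k) (ha : 0 < a) (han : a ≤ n) (hM : 0 < M)
    (x : ℝ) (hx : x ∈ Set.Icc (1 / (k : ℝ)) (1 - 1 / (k : ℝ)))
    {Ω : Type*} [MeasurableSpace Ω] (μ : Measure Ω) [IsProbabilityMeasure μ]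
    (X : Fin n → Ω → ℝ) (U : Fin n → Fin M → Ω → ℝ)
    (hXm : ∀ i, Measurable (X i)) (hUm : ∀ i j, Measurable (U i j))
    (hindep : iIndepFun
      (Sum.elim X (fun p : Fin n × Fin M => U p.1 p.2)) μ)
    (hXunif : ∀ i, Measure.map (X i) μ = volume.restrict (Set.Icc (0 : ℝ) 1))
    (hUunif : ∀ i j, Measure.map (U i j) μ = volume.restrict (Set.Icc (0 : ℝ) 1))
    (q : Fin n → Ω → ℝ) (hq : q = fun i ω => max 0 (1 - k * |X i ω - x|))
    (B : Fin n → Fin M → Ω → ℝ)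
    (hB : B = fun i j ω => if U i j ω ≤ ((a : ℝ) / n) * q i ω then 1 else 0)
    (W : Fin n → Ω → ℝ)
    (hW : W = fun i ω => ((k : ℝ) / (a * M)) * ∑ j, B i j ω) :
    (∫ ω, ∑ i, W i ω ^ 2 ∂μ
        = ((k : ℝ) / a) * ((1 - 1 / (M : ℝ)) * (2 * a) / (3 * n) + 1 / (M : ℝ)))
      ∧ (M = 1 → ∫ ω, ∑ i, W i ω ^ 2 ∂μ = (k : ℝ) / a)
      ∧ Tendsto
          (fun M' : ℕ =>
            ((k : ℝ) / a) * ((1 - 1 / (M' : ℝ)) * (2 * a) / (3 * n) + 1 / (M' : ℝ)))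
          atTop (nhds (2 * k / (3 * n))) := by
  subst hq hB hW
  obtain ⟨hx1, hx2⟩ := hx
  have hk0 : (0:ℝ) < k := by positivity
  have hn : 0 < n := lt_of_lt_of_le ha han
  have ha' : ((a:ℝ)) ≠ 0 := by positivity
  have hn' : ((n:ℝ)) ≠ 0 := by positivity
  have hM' : ((M:ℝ)) ≠ 0 := by positivity
  have hk' : ((k:ℝ)) ≠ 0 := ne_of_gt hk0
  set ν : Measure ℝ := volume.restrict (Set.Icc (0:ℝ) 1) with hν
  haveI : IsProbabilityMeasure ν := ⟨by
    rw [hν, Measure.restrict_apply_univ, Real.volume_Icc]; norm_num⟩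
  set T : ℝ → ℝ := fun s => max 0 (1 - (k:ℝ) * |s - x|) with hT
  set c : ℝ := (a:ℝ)/n with hc
  have hTm : Measurable T := by
    apply Measurable.max measurable_const
    exact measurable_const.sub (measurable_const.mul (measurable_id.sub measurable_const).abs)
  have hT0 : ∀ s, 0 ≤ T s := fun s => le_max_left _ _
  have hT1 : ∀ s, T s ≤ 1 := fun s => max_le zero_le_one (by
    have : (0:ℝ) ≤ (k:ℝ)*|s - x| := by positivity
    linarith)
  have hc0 : 0 ≤ c := by positivity
  have hc1 : c ≤ 1 := by
    rw [hc, div_le_one (by positivity)]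
    exact_mod_cast han
  have hct0 : ∀ s, 0 ≤ c * T s := fun s => mul_nonneg hc0 (hT0 s)
  have hct1 : ∀ s, c * T s ≤ 1 := fun s => mul_le_one₀ hc1 (hT0 s) (hT1 s)
  -- integrals of T
  have hTint1 : ∫ s, T s ∂ν = 1/(k:ℝ) := by
    have h := tri_split k hk x hx1 hx2 1 one_pos
    simp only [pow_one] at h
    rw [hν]
    calc ∫ s in Set.Icc (0:ℝ) 1, T s = 2 * ∫ t in (0:ℝ)..(1/(k:ℝ)), (1-(k:ℝ)*t)^1 := by
          simp only [pow_one] at h ⊢; exact h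
      _ = 1/(k:ℝ) := by rw [poly_int1 k hk]; ring
  have hTint2 : ∫ s, (T s)^2 ∂ν = 2/(3*(k:ℝ)) := by
    have h := tri_split k hk x hx1 hx2 2 two_pos
    rw [hν]
    calc ∫ s in Set.Icc (0:ℝ) 1, (T s)^2 = 2 * ∫ t in (0:ℝ)..(1/(k:ℝ)), (1-(k:ℝ)*t)^2 := h
      _ = 2/(3*(k:ℝ)) := by rw [poly_int2 k hk]; ring
  have hfm : ∀ idx, Measurable ((Sum.elim X (fun p : Fin n × Fin M => U p.1 p.2)) idx) := by
    rintro (i | p)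
    · exact hXm i
    · exact hUm p.1 p.2
  -- B rewritten in terms of c and T
  have hBdef : ∀ i j, (fun ω => if U i j ω ≤ ((a:ℝ)/n) * max 0 (1 - (k:ℝ)*|X i ω - x|) then (1:ℝ) else 0)
      = fun ω => if U i j ω ≤ c * T (X i ω) then (1:ℝ) else 0 := by
    intro i j; rfl
  -- first moment
  have hEB1 : ∀ i j, ∫ ω, (if U i j ω ≤ c * T (X i ω) then (1:ℝ) else 0) ∂μ
      = c * (1/(k:ℝ)) := by
    intro i j
    have hpair : IndepFun (X i) (U i j) μ :=
      hindep.indepFun (show (Sum.inl i : Fin n ⊕ (Fin n × Fin M)) ≠ Sum.inr (i,j) by simp)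
    have hmap : Measure.map (fun ω => (X i ω, U i j ω)) μ = ν.prod ν := by
      have h := (indepFun_iff_map_prod_eq_prod_map_map (hXm i).aemeasurable
        (hUm i j).aemeasurable).mp hpair
      rw [hXunif i, hUunif i j] at h
      exact h
    set F : ℝ × ℝ → ℝ := fun p => if p.2 ≤ c * T p.1 then 1 else 0 with hF
    have hsF : MeasurableSet {p : ℝ × ℝ | p.2 ≤ c * T p.1} :=
      measurableSet_le measurable_snd (measurable_const.mul (hTm.comp measurable_fst))
    have hFind : F = Set.indicator {p : ℝ × ℝ | p.2 ≤ c * T p.1} (fun _ => (1:ℝ)) := by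
      ext p; simp [hF, Set.indicator_apply]
    have hFm : Measurable F := by rw [hFind]; exact measurable_const.indicator hsF
    have hFint : Integrable F (ν.prod ν) := by
      rw [hFind]; exact (integrable_const 1).indicator hsF
    calc ∫ ω, (if U i j ω ≤ c * T (X i ω) then (1:ℝ) else 0) ∂μ
        = ∫ p, F p ∂(Measure.map (fun ω => (X i ω, U i j ω)) μ) :=
          (integral_map ((hXm i).prodMk (hUm i j)).aemeasurable
            hFm.aestronglyMeasurable).symm
      _ = ∫ p, F p ∂(ν.prod ν) := by rw [hmap]
      _ = ∫ s, ∫ u, F (s, u) ∂ν ∂ν := integral_prod F hFint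
      _ = ∫ s, c * T s ∂ν := by
          congr 1; ext s
          exact unif_cdf (c * T s) (hct0 s) (hct1 s)
      _ = c * ∫ s, T s ∂ν := integral_const_mul c T
      _ = c * (1/(k:ℝ)) := by rw [hTint1]
  -- second moment for distinct trees
  have hEB2 : ∀ i (j j' : Fin M), j ≠ j' →
      ∫ ω, (if U i j ω ≤ c * T (X i ω) then (1:ℝ) else 0)
          * (if U i j' ω ≤ c * T (X i ω) then (1:ℝ) else 0) ∂μ
        = c^2 * (2/(3*(k:ℝ))) := by
    intro i j j' hjj'
    have hGind : IndepFun (X i) (fun ω => (U i j ω, U i j' ω)) μ :=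
      (hindep.indepFun_prodMk hfm (Sum.inr (i,j)) (Sum.inr (i,j')) (Sum.inl i)
        (by simp) (by simp)).symm
    have hUU : Measure.map (fun ω => (U i j ω, U i j' ω)) μ = ν.prod ν := by
      have h := (indepFun_iff_map_prod_eq_prod_map_map (hUm i j).aemeasurable
        (hUm i j').aemeasurable).mp
        (hindep.indepFun (show (Sum.inr (i,j) : Fin n ⊕ (Fin n × Fin M)) ≠ Sum.inr (i,j')
          by simp [Prod.ext_iff, hjj']))
      rw [hUunif i j, hUunif i j'] at h
      exact h
    have hmap3 : Measure.map (fun ω => (X i ω, (U i j ω, U i j' ω))) μ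
        = ν.prod (ν.prod ν) := by
      rw [(indepFun_iff_map_prod_eq_prod_map_map (hXm i).aemeasurable
        ((hUm i j).prodMk (hUm i j')).aemeasurable).mp hGind, hUU, hXunif i]
    set G : ℝ × (ℝ × ℝ) → ℝ :=
      fun p => if p.2.1 ≤ c * T p.1 ∧ p.2.2 ≤ c * T p.1 then 1 else 0 with hG
    have hsG : MeasurableSet {p : ℝ × (ℝ × ℝ) | p.2.1 ≤ c * T p.1 ∧ p.2.2 ≤ c * T p.1} := by
      apply MeasurableSet.inter
      · exact measurableSet_le (measurable_fst.comp measurable_snd)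
          (measurable_const.mul (hTm.comp measurable_fst))
      · exact measurableSet_le (measurable_snd.comp measurable_snd)
          (measurable_const.mul (hTm.comp measurable_fst))
    have hGfold : G = Set.indicator {p : ℝ × (ℝ × ℝ) | p.2.1 ≤ c * T p.1 ∧ p.2.2 ≤ c * T p.1}
        (fun _ => (1:ℝ)) := by
      ext p; simp [hG, Set.indicator_apply]
    have hGm : Measurable G := by rw [hGfold]; exact measurable_const.indicator hsG
    have hGint : Integrable G (ν.prod (ν.prod ν)) := by
      rw [hGfold]; exact (integrable_const 1).indicator hsG
    have hprodeq : (fun ω => (if U i j ω ≤ c * T (X i ω) then (1:ℝ) else 0)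
        * (if U i j' ω ≤ c * T (X i ω) then (1:ℝ) else 0))
        = fun ω => G (X i ω, (U i j ω, U i j' ω)) := by
      ext ω
      by_cases h1 : U i j ω ≤ c * T (X i ω) <;>
        by_cases h2 : U i j' ω ≤ c * T (X i ω) <;> simp [hG, h1, h2]
    rw [hprodeq]
    calc ∫ ω, G (X i ω, (U i j ω, U i j' ω)) ∂μ
        = ∫ p, G p ∂(Measure.map (fun ω => (X i ω, (U i j ω, U i j' ω))) μ) :=
          (integral_map ((hXm i).prodMk ((hUm i j).prodMk (hUm i j'))).aemeasurable
            hGm.aestronglyMeasurable).symm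
      _ = ∫ p, G p ∂(ν.prod (ν.prod ν)) := by rw [hmap3]
      _ = ∫ s, ∫ p, G (s, p) ∂(ν.prod ν) ∂ν := integral_prod G hGint
      _ = ∫ s, (c * T s)^2 ∂ν := by
          congr 1; ext s
          have : (fun p : ℝ × ℝ => G (s, p))
              = fun p => (if p.1 ≤ c * T s then (1:ℝ) else 0)
                  * (if p.2 ≤ c * T s then (1:ℝ) else 0) := by
            ext p
            by_cases h1 : p.1 ≤ c * T s <;> by_cases h2 : p.2 ≤ c * T s <;> simp [hG, h1, h2]
          rw [this]
          calc ∫ p : ℝ × ℝ, (if p.1 ≤ c * T s then (1:ℝ) else 0)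
                  * (if p.2 ≤ c * T s then (1:ℝ) else 0) ∂(ν.prod ν)
              = (∫ u, (if u ≤ c * T s then (1:ℝ) else 0) ∂ν)
                  * ∫ u, (if u ≤ c * T s then (1:ℝ) else 0) ∂ν :=
                integral_prod_mul (L := ℝ) (fun u => if u ≤ c * T s then (1:ℝ) else 0)
                  (fun u => if u ≤ c * T s then (1:ℝ) else 0)
            _ = (c * T s) * (c * T s) := by rw [unif_cdf _ (hct0 s) (hct1 s)]
            _ = (c * T s)^2 := (sq _).symm
      _ = c^2 * (2/(3*(k:ℝ))) := by
          have : (fun s => (c * T s)^2) = fun s => c^2 * (T s)^2 := by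
            ext s; ring
          rw [this, integral_const_mul, hTint2]
  -- integrability of products of B's
  have hBint : ∀ i (j j' : Fin M), Integrable (fun ω =>
      (if U i j ω ≤ c * T (X i ω) then (1:ℝ) else 0)
        * (if U i j' ω ≤ c * T (X i ω) then (1:ℝ) else 0)) μ := by
    intro i j j'
    have hs : MeasurableSet {ω | U i j ω ≤ c * T (X i ω) ∧ U i j' ω ≤ c * T (X i ω)} := by
      apply MeasurableSet.inter
      · exact measurableSet_le (hUm i j) (measurable_const.mul (hTm.comp (hXm i)))
      · exact measurableSet_le (hUm i j') (measurable_const.mul (hTm.comp (hXm i)))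
    have : (fun ω => (if U i j ω ≤ c * T (X i ω) then (1:ℝ) else 0)
        * (if U i j' ω ≤ c * T (X i ω) then (1:ℝ) else 0))
        = Set.indicator {ω | U i j ω ≤ c * T (X i ω) ∧ U i j' ω ≤ c * T (X i ω)}
            (fun _ => (1:ℝ)) := by
      ext ω
      by_cases h1 : U i j ω ≤ c * T (X i ω) <;>
        by_cases h2 : U i j' ω ≤ c * T (X i ω) <;>
        simp [Set.indicator_apply, h1, h2]
    rw [this]
    exact (integrable_const 1).indicator hs
  -- main expansion
  have hmain : ∫ ω, ∑ i, (((k:ℝ) / (a * M)) * ∑ j, (if U i j ω ≤ ((a:ℝ)/n) *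
        max 0 (1 - (k:ℝ)*|X i ω - x|) then (1:ℝ) else 0))^2 ∂μ
      = ((k : ℝ) / a) * ((1 - 1 / (M : ℝ)) * (2 * a) / (3 * n) + 1 / (M : ℝ)) := by
    have hexpand : ∀ ω, ∑ i, (((k:ℝ) / (a * M)) * ∑ j, (if U i j ω ≤ ((a:ℝ)/n) *
          max 0 (1 - (k:ℝ)*|X i ω - x|) then (1:ℝ) else 0))^2
        = ∑ i, ∑ j, ∑ j', ((k:ℝ)/(a*M))^2 *
            ((if U i j ω ≤ c * T (X i ω) then (1:ℝ) else 0)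
              * (if U i j' ω ≤ c * T (X i ω) then (1:ℝ) else 0)) := by
      intro ω
      refine Finset.sum_congr rfl fun i _ => ?_
      rw [mul_pow, sq (∑ j, _), Finset.sum_mul_sum, Finset.mul_sum]
      refine Finset.sum_congr rfl fun j _ => ?_
      rw [Finset.mul_sum]
    have hintg : ∫ ω, ∑ i, (((k:ℝ) / (a * M)) * ∑ j, (if U i j ω ≤ ((a:ℝ)/n) *
          max 0 (1 - (k:ℝ)*|X i ω - x|) then (1:ℝ) else 0))^2 ∂μ
        = ∑ i : Fin n, ∑ j : Fin M, ∑ j' : Fin M, ((k:ℝ)/(a*M))^2 *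
            ∫ ω, (if U i j ω ≤ c * T (X i ω) then (1:ℝ) else 0)
              * (if U i j' ω ≤ c * T (X i ω) then (1:ℝ) else 0) ∂μ := by
      rw [integral_congr_ae (Filter.Eventually.of_forall hexpand)]
      rw [integral_finset_sum _ fun i _ => integrable_finset_sum _
        fun j _ => integrable_finset_sum _ fun j' _ => (hBint i j j').const_mul _]
      refine Finset.sum_congr rfl fun i _ => ?_
      rw [integral_finset_sum _ fun j _ => integrable_finset_sum _
        fun j' _ => (hBint i j j').const_mul _]
      refine Finset.sum_congr rfl fun j _ => ?_
      rw [integral_finset_sum _ fun j' _ => (hBint i j j').const_mul _]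
      exact Finset.sum_congr rfl fun j' _ => integral_const_mul _ _
    rw [hintg]
    have hdiag : ∀ i (j : Fin M),
        ∫ ω, (if U i j ω ≤ c * T (X i ω) then (1:ℝ) else 0)
          * (if U i j ω ≤ c * T (X i ω) then (1:ℝ) else 0) ∂μ = c * (1/(k:ℝ)) := by
      intro i j
      have : (fun ω => (if U i j ω ≤ c * T (X i ω) then (1:ℝ) else 0)
          * (if U i j ω ≤ c * T (X i ω) then (1:ℝ) else 0))
          = fun ω => (if U i j ω ≤ c * T (X i ω) then (1:ℝ) else 0) := by
        ext ω; by_cases h : U i j ω ≤ c * T (X i ω) <;> simp [h]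
      rw [this]; exact hEB1 i j
    have hinner : ∀ i (j : Fin M), ∑ j' : Fin M, ((k:ℝ)/(a*M))^2 *
        ∫ ω, (if U i j ω ≤ c * T (X i ω) then (1:ℝ) else 0)
          * (if U i j' ω ≤ c * T (X i ω) then (1:ℝ) else 0) ∂μ
        = ((k:ℝ)/(a*M))^2 * (c * (1/(k:ℝ)) + ((M:ℝ)-1) * (c^2 * (2/(3*(k:ℝ))))) := by
      intro i j
      rw [← Finset.sum_erase_add _ _ (Finset.mem_univ j), hdiag i j]
      have herase : ∑ j' ∈ Finset.univ.erase j, ((k:ℝ)/(a*M))^2 *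
          ∫ ω, (if U i j ω ≤ c * T (X i ω) then (1:ℝ) else 0)
            * (if U i j' ω ≤ c * T (X i ω) then (1:ℝ) else 0) ∂μ
          = ((M:ℝ)-1) * (((k:ℝ)/(a*M))^2 * (c^2 * (2/(3*(k:ℝ))))) := by
        rw [Finset.sum_congr rfl (fun j' hj' => by
          rw [hEB2 i j j' (Ne.symm (Finset.mem_erase.mp hj').1)])]
        rw [Finset.sum_const, Finset.card_erase_of_mem (Finset.mem_univ j),
          Finset.card_univ, Fintype.card_fin, nsmul_eq_mul, Nat.cast_sub hM]
        push_cast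
        ring
      rw [herase]
      ring
    have houter : ∀ i : Fin n, ∑ j : Fin M, ∑ j' : Fin M, ((k:ℝ)/(a*M))^2 *
        ∫ ω, (if U i j ω ≤ c * T (X i ω) then (1:ℝ) else 0)
          * (if U i j' ω ≤ c * T (X i ω) then (1:ℝ) else 0) ∂μ
        = (M:ℝ) * (((k:ℝ)/(a*M))^2 * (c * (1/(k:ℝ)) + ((M:ℝ)-1) * (c^2 * (2/(3*(k:ℝ)))))) := by
      intro i
      rw [Finset.sum_congr rfl fun j _ => hinner i j, Finset.sum_const,
        Finset.card_univ, Fintype.card_fin, nsmul_eq_mul]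
    rw [Finset.sum_congr rfl fun i _ => houter i, Finset.sum_const,
      Finset.card_univ, Fintype.card_fin, nsmul_eq_mul]
    rw [hc]
    field_simp
    ring
  refine ⟨hmain, ?_, ?_⟩
  · intro hM1
    subst hM1
    rw [hmain]
    norm_num
  · have h0 : Tendsto (fun M' : ℕ => 1/(M':ℝ)) atTop (nhds 0) :=
      tendsto_one_div_atTop_nhds_zero_nat
    have hlim : Tendsto (fun M' : ℕ =>
        ((k : ℝ) / a) * ((1 - 1 / (M' : ℝ)) * (2 * a) / (3 * n) + 1 / (M' : ℝ)))
        atTop (nhds (((k:ℝ)/a) * ((1 - 0) * (2 * a) / (3 * n) + 0))) := by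
      apply Tendsto.const_mul
      exact ((((tendsto_const_nhds.sub h0).mul_const _).div_const _).add h0)
    have : ((k:ℝ)/a) * ((1 - 0) * (2 * (a:ℝ)) / (3 * n) + 0) = 2 * k / (3 * n) := by
      field_simp
      ring
    rwa [this] at hlim
end

section
/- Let m : ℝ → ℝ be three times continuously differentiable and let x ∈ (0,1). For each integer k with 1/k ≤ x ≤ 1 − 1/k and each t ∈ [0,1], define ψ_k(x,t) := k ∫ m(u) du over the interval [(⌊kx+t⌋ − t)/k, (⌊kx+t⌋ + 1 − t)/k] (the cell containing x in the toy partition with offset t). Then lim_{k→∞} k² ∫_0^1 (ψ_k(x,t) − m(x))² dt = m′(x)²/12. -/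
open Filter intervalIntegral


lemma fract_sq_integral (y : ℝ) :
    (∫ t in (0:ℝ)..1, (1/2 - Int.fract (y + t))^2) = 1/12 := by
  have hper : Function.Periodic (fun u : ℝ => (1/2 - Int.fract u)^2) 1 := fun u => by
    simp [Int.fract_add_one]
  have h1 : (∫ t in (0:ℝ)..1, (1/2 - Int.fract (y + t))^2)
      = ∫ u in (y+0)..(y+1), (1/2 - Int.fract u)^2 :=
    intervalIntegral.integral_comp_add_left (fun u => (1/2 - Int.fract u)^2) y
  have h2 : (∫ u in y..(y+1), (1/2 - Int.fract u)^2)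
      = ∫ u in (0:ℝ)..(0+1), (1/2 - Int.fract u)^2 := hper.intervalIntegral_add_eq y 0
  have h3 : (∫ u in (0:ℝ)..1, (1/2 - Int.fract u)^2) = ∫ u in (0:ℝ)..1, (1/2 - u)^2 := by
    apply intervalIntegral.integral_congr
    intro u hu
    rw [Set.uIcc_of_le (by norm_num : (0:ℝ) ≤ 1)] at hu
    rcases eq_or_lt_of_le hu.2 with h | h
    · subst h; norm_num
    · simp [Int.fract_eq_self.mpr ⟨hu.1, h⟩]
  have h4 : (∫ u in (0:ℝ)..1, (1/2 - u)^2) = ∫ u in (1/2 - 1 : ℝ)..(1/2 - 0 : ℝ), u^2 :=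
    intervalIntegral.integral_comp_sub_left (fun u => u^2) (1/2)
  rw [h1]; simp only [add_zero] at h1 ⊢
  rw [h2]; simp only [zero_add] at h2 ⊢
  rw [h3, h4, integral_pow]
  norm_num


lemma toy_key (m : ℝ → ℝ) (hmc : Continuous m) (hm1 : Differentiable ℝ m)
    (x d L : ℝ) (hLnn : 0 ≤ L)
    (hlip : ∀ u ∈ Set.Icc (x-1) (x+1), |deriv m u - d| ≤ L * |u - x|)
    (k : ℝ) (hk : 1 ≤ k) (t : ℝ) :
    |k * ((k * ∫ u in (((⌊k * x + t⌋ : ℝ) - t) / k)..(((⌊k * x + t⌋ : ℝ) + 1 - t) / k), m u) - m x)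
      - d * (1/2 - Int.fract (k * x + t))| ≤ L / k := by
  have hk0 : (0:ℝ) < k := lt_of_lt_of_le one_pos hk
  have hk1 : 1 / k ≤ 1 := by rw [div_le_one hk0]; exact hk
  set j : ℤ := ⌊k * x + t⌋ with hj
  set s : ℝ := Int.fract (k * x + t) with hsdef
  set a : ℝ := ((j:ℝ) - t) / k with hadef
  set b : ℝ := ((j:ℝ) + 1 - t) / k with hbdef
  have hs : s = k * x + t - (j:ℝ) := (Int.self_sub_floor _).symm
  have hs0 : 0 ≤ s := Int.fract_nonneg _
  have hs1 : s < 1 := Int.fract_lt_one _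
  have hsk : 0 ≤ s / k := div_nonneg hs0 hk0.le
  have hsk2 : s / k ≤ 1 / k := by gcongr <;> linarith
  have hsk3 : 0 ≤ (1 - s) / k := div_nonneg (by linarith) hk0.le
  have hsk4 : (1 - s) / k ≤ 1 / k := by gcongr <;> linarith
  have ha : a = x - s / k := by rw [hadef, hs]; field_simp; ring
  have hb : b = x + (1 - s) / k := by rw [hbdef, hs]; field_simp; ring
  have hab : a ≤ b := by rw [ha, hb]; linarith
  have hxab : x ∈ Set.Icc a b := by rw [ha, hb]; constructor <;> [linarith; linarith]
  have hdist : ∀ u ∈ Set.Icc a b, |u - x| ≤ 1 / k := by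
    intro u hu
    rw [ha] at hu; rw [hb] at hu
    rw [abs_le]; constructor <;> [linarith [hu.1]; linarith [hu.2]]
  have hsub : Set.Icc a b ⊆ Set.Icc (x-1) (x+1) := by
    intro u hu
    have h1 := hdist u hu
    rw [abs_le] at h1
    constructor <;> [linarith [h1.1]; linarith [h1.2]]
  -- the Taylor remainder g
  set g : ℝ → ℝ := fun u => m u - m x - d * (u - x) with hgdef
  have hgderiv : ∀ u, HasDerivAt g (deriv m u - d) u := by
    intro u
    have h1 : HasDerivAt (fun u : ℝ => m x + d * (u - x)) d u := by
      simpa using (((hasDerivAt_id u).sub_const x).const_mul d).const_add (m x)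
    have h2 := ((hm1 u).hasDerivAt).sub h1
    have h3 : g = m - fun u => m x + d * (u - x) := by
      funext v; simp only [hgdef, Pi.sub_apply]; ring
    rw [h3]; exact h2
  have hgbound : ∀ u ∈ Set.Icc a b, |g u| ≤ L * (1/k) * (1/k) := by
    intro u hu
    have h := (convex_Icc a b).norm_image_sub_le_of_norm_hasDerivWithin_le
      (f := g) (f' := fun v => deriv m v - d)
      (fun v _ => (hgderiv v).hasDerivWithinAt)
      (fun v hv => by
        rw [Real.norm_eq_abs]
        exact (hlip v (hsub hv)).trans
          (mul_le_mul_of_nonneg_left (hdist v hv) hLnn))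
      hxab hu
    have hgx : g x = 0 := by simp [hgdef]
    rw [hgx, sub_zero] at h; simp only [Real.norm_eq_abs] at h
    exact h.trans (mul_le_mul_of_nonneg_left (hdist u hu) (by positivity))
  set E : ℝ := ∫ u in a..b, g u with hEdef
  have hba : b - a = 1 / k := by rw [ha, hb]; field_simp; ring
  have hE : |E| ≤ L * (1/k) * (1/k) * (1/k) := by
    have h := intervalIntegral.norm_integral_le_of_norm_le_const
      (C := L * (1/k) * (1/k)) (f := g) (a := a) (b := b) ?_
    · rw [Real.norm_eq_abs] at h
      calc |E| ≤ L * (1/k) * (1/k) * |b - a| := h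
        _ = L * (1/k) * (1/k) * (1/k) := by rw [hba, abs_of_pos (by positivity)]
    · intro u hu
      rw [Set.uIoc_of_le hab] at hu
      exact hgbound u (Set.Ioc_subset_Icc_self hu)
  -- splitting the integral
  have haffc : Continuous (fun u : ℝ => m x + d * (u - x)) := by fun_prop
  have hF : ∀ u : ℝ, HasDerivAt (fun u : ℝ => m x * u + d * (u - x)^2 / 2) (m x + d * (u - x)) u := by
    intro u
    have h1 : HasDerivAt (fun u : ℝ => m x * u) (m x) u := by
      simpa using (hasDerivAt_id u).const_mul (m x)
    have h2 : HasDerivAt (fun u : ℝ => d * (u - x)^2 / 2) (d * (u - x)) u := by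
      have := (((hasDerivAt_id u).sub_const x).pow 2).const_mul d
      have h3 := this.div_const 2
      exact h3.congr_deriv (by simp only [id]; norm_num; ring)
    exact h1.add h2
  have h2 : (∫ u in a..b, (m x + d * (u - x)))
      = (m x * b + d * (b - x)^2 / 2) - (m x * a + d * (a - x)^2 / 2) :=
    intervalIntegral.integral_eq_sub_of_hasDerivAt (fun u _ => hF u)
      (haffc.intervalIntegrable a b)
  have hgc : Continuous g := by rw [hgdef]; fun_prop
  have hsplit : (∫ u in a..b, m u)
      = E + ((m x * b + d * (b - x)^2 / 2) - (m x * a + d * (a - x)^2 / 2)) := by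
    rw [hEdef, ← h2, ← intervalIntegral.integral_add (hgc.intervalIntegrable a b)
      (haffc.intervalIntegrable a b)]
    apply intervalIntegral.integral_congr
    intro u _
    simp only [hgdef]
    ring
  -- the identity
  have hiden : k * ((k * ∫ u in a..b, m u) - m x) - d * (1/2 - s) = k * (k * E) := by
    rw [hsplit, ha, hb]
    field_simp
    ring
  rw [hiden]
  have : |k * (k * E)| = k * (k * |E|) := by
    rw [abs_mul, abs_mul, abs_of_pos hk0]
  rw [this]
  calc k * (k * |E|) ≤ k * (k * (L * (1/k) * (1/k) * (1/k))) := by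
        apply mul_le_mul_of_nonneg_left (mul_le_mul_of_nonneg_left hE hk0.le) hk0.le
    _ = L / k := by field_simp

set_option maxHeartbeats 1000000 in
open MeasureTheory in
/-- Approximation error of a single randomized toy tree: for `m` of class `C³` and
`x ∈ (0,1)`, with `ψ k t` the mean of `m` over the cell containing `x` in the toy
partition of mesh `1/k` with offset `t`,
`k² ∫₀¹ (ψ k t − m(x))² dt → m′(x)²/12` as `k → ∞`. -/
theorem toy_tree_approximation_error
    (m : ℝ → ℝ) (hm : ContDiff ℝ 3 m) (x : ℝ) (hx : x ∈ Set.Ioo (0 : ℝ) 1)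
    (ψ : ℕ → ℝ → ℝ)
    (hψ : ψ = fun (k : ℕ) (t : ℝ) =>
      (k : ℝ) * ∫ u in (((⌊(k : ℝ) * x + t⌋ : ℝ) - t) / k)..
          (((⌊(k : ℝ) * x + t⌋ : ℝ) + 1 - t) / k), m u) :
    Tendsto (fun k : ℕ => (k : ℝ) ^ 2 * ∫ t in (0 : ℝ)..1, (ψ k t - m x) ^ 2)
      atTop (nhds (deriv m x ^ 2 / 12)) := by
  have hmc : Continuous m := hm.continuous
  have hm3 : ContDiff ℝ ((2:ℕ)+1) m := by norm_num; exact_mod_cast hm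
  have hm1 : Differentiable ℝ m := hm.differentiable (by norm_num)
  have hm2 : ContDiff ℝ 2 (deriv m) := by
    have h := (contDiff_succ_iff_deriv).mp hm3
    exact_mod_cast h.2.2
  have hm21 : ContDiff ℝ ((1:ℕ)+1) (deriv m) := by norm_num; exact_mod_cast hm2
  have hdm : Differentiable ℝ (deriv m) := hm2.differentiable (by norm_num)
  have hddm : Continuous (deriv (deriv m)) := by
    have h := (contDiff_succ_iff_deriv).mp hm21
    exact h.2.2.continuous
  obtain ⟨L0, hL0⟩ := (isCompact_Icc (a := x-1) (b := x+1)).exists_bound_of_continuousOn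
    hddm.continuousOn
  set L := max L0 0 with hLdef
  have hLnn : 0 ≤ L := le_max_right _ _
  have hL : ∀ u ∈ Set.Icc (x-1) (x+1), ‖deriv (deriv m) u‖ ≤ L :=
    fun u hu => (hL0 u hu).trans (le_max_left _ _)
  have hxmem : x ∈ Set.Icc (x-1) (x+1) := by constructor <;> linarith
  set d := deriv m x with hd
  have hlip : ∀ u ∈ Set.Icc (x-1) (x+1), |deriv m u - d| ≤ L * |u - x| := by
    intro u hu
    have h := (convex_Icc (x-1) (x+1)).norm_image_sub_le_of_norm_hasDerivWithin_le
      (f := deriv m) (f' := deriv (deriv m))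
      (fun v _ => ((hdm v).hasDerivAt).hasDerivWithinAt) hL hxmem hu
    simpa [Real.norm_eq_abs] using h
  set C := L * (2 * |d| + L) with hC
  have hCnn : 0 ≤ C := by positivity
  -- primitive of m
  set G : ℝ → ℝ := fun z => ∫ u in (0:ℝ)..z, m u with hG
  have hGcont : Continuous G :=
    intervalIntegral.continuous_primitive (fun a b => hmc.intervalIntegrable a b) 0
  -- the main estimate, for k ≥ 1
  have main : ∀ k : ℕ, 1 ≤ k →
      |((k : ℝ) ^ 2 * ∫ t in (0 : ℝ)..1, (ψ k t - m x) ^ 2) - d ^ 2 / 12| ≤ C / k := by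
    intro k hk
    have hk1 : (1:ℝ) ≤ (k:ℝ) := by exact_mod_cast hk
    have hk0 : (0:ℝ) < (k:ℝ) := by linarith
    -- pointwise bounds
    have hkey : ∀ t : ℝ, |(k:ℝ) * (ψ k t - m x) - d * (1/2 - Int.fract ((k:ℝ) * x + t))|
        ≤ L / k := by
      intro t
      rw [hψ]
      exact toy_key m hmc hm1 x d L hLnn hlip (k:ℝ) hk1 t
    have hPb : ∀ t : ℝ, |d * (1/2 - Int.fract ((k:ℝ) * x + t))| ≤ |d| := by
      intro t
      rw [abs_mul]
      have h1 : |1/2 - Int.fract ((k:ℝ) * x + t)| ≤ 1 := by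
        have := Int.fract_nonneg ((k:ℝ) * x + t)
        have := Int.fract_lt_one ((k:ℝ) * x + t)
        rw [abs_le]; constructor <;> linarith
      calc |d| * |1/2 - Int.fract ((k:ℝ)*x + t)| ≤ |d| * 1 :=
            mul_le_mul_of_nonneg_left h1 (abs_nonneg d)
        _ = |d| := mul_one _
    have hLk : L / (k:ℝ) ≤ L := by
      rw [div_le_iff₀ hk0]; nlinarith
    have hsq : ∀ t : ℝ, |(k:ℝ)^2 * (ψ k t - m x)^2
        - d^2 * (1/2 - Int.fract ((k:ℝ) * x + t))^2| ≤ C / k := by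
      intro t
      set P := d * (1/2 - Int.fract ((k:ℝ) * x + t)) with hP
      set Q := (k:ℝ) * (ψ k t - m x) - P with hQ
      have hQb : |Q| ≤ L / k := hkey t
      have h1 : (k:ℝ)^2 * (ψ k t - m x)^2 = (P + Q)^2 := by
        rw [hQ]; ring
      have h2 : d^2 * (1/2 - Int.fract ((k:ℝ) * x + t))^2 = P^2 := by
        rw [hP]; ring
      rw [h1, h2]
      have h3 : (P + Q)^2 - P^2 = Q * (2*P + Q) := by ring
      rw [h3, abs_mul]
      calc |Q| * |2*P + Q| ≤ (L/k) * (2*|d| + L) := by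
            apply mul_le_mul hQb _ (abs_nonneg _) (by positivity)
            calc |2*P + Q| ≤ |2*P| + |Q| := abs_add_le _ _
              _ = 2*|P| + |Q| := by rw [abs_mul]; norm_num
              _ ≤ 2*|d| + L := add_le_add (by linarith [hPb t]) (hQb.trans hLk)
        _ = C / k := by rw [hC]; field_simp
    -- bound for integrability
    have hψb : ∀ t : ℝ, |ψ k t - m x| ≤ (|d| + L) / k := by
      intro t
      have h1 := hkey t
      have h2 := hPb t
      have h3 : |(k:ℝ) * (ψ k t - m x)| ≤ |d| + L := by
        calc |(k:ℝ) * (ψ k t - m x)| ≤ |(k:ℝ) * (ψ k t - m x) - d * (1/2 - Int.fract ((k:ℝ)*x+t))|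
              + |d * (1/2 - Int.fract ((k:ℝ)*x+t))| := by
                have := abs_sub_abs_le_abs_sub ((k:ℝ) * (ψ k t - m x)) (d * (1/2 - Int.fract ((k:ℝ)*x+t)))
                linarith [abs_sub_abs_le_abs_sub ((k:ℝ) * (ψ k t - m x)) (d * (1/2 - Int.fract ((k:ℝ)*x+t)))]
          _ ≤ L / k + |d| := add_le_add h1 h2
          _ ≤ |d| + L := by linarith
      rw [abs_mul, abs_of_pos hk0] at h3
      rw [le_div_iff₀ hk0]
      linarith
    -- measurability of ψ k
    have hψmeas : Measurable (ψ k) := by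
      rw [hψ]; dsimp only
      have hfl : Measurable (fun t : ℝ => ((⌊(k:ℝ) * x + t⌋ : ℤ) : ℝ)) :=
        (Measurable.of_discrete (f := fun z : ℤ => (z : ℝ))).comp
          (Measurable.floor (measurable_id.const_add _))
      have ha : Measurable (fun t : ℝ => (((⌊(k:ℝ) * x + t⌋ : ℤ) : ℝ) - t) / (k:ℝ)) :=
        ((hfl.sub measurable_id).div_const _)
      have hb : Measurable (fun t : ℝ => (((⌊(k:ℝ) * x + t⌋ : ℤ) : ℝ) + 1 - t) / (k:ℝ)) :=
        (((hfl.add_const 1).sub measurable_id).div_const _)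
      have heq : (fun (t : ℝ) => (k : ℝ) * ∫ u in (((⌊(k : ℝ) * x + t⌋ : ℝ) - t) / k)..
          (((⌊(k : ℝ) * x + t⌋ : ℝ) + 1 - t) / k), m u)
          = fun t => (k:ℝ) * (G ((((⌊(k:ℝ) * x + t⌋ : ℤ) : ℝ) + 1 - t) / (k:ℝ))
            - G ((((⌊(k:ℝ) * x + t⌋ : ℤ) : ℝ) - t) / (k:ℝ))) := by
        funext t
        rw [hG]
        congr 1
        exact (intervalIntegral.integral_interval_sub_left
          (hmc.intervalIntegrable _ _) (hmc.intervalIntegrable _ _)).symm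
      rw [heq]
      exact (((hGcont.measurable.comp hb).sub (hGcont.measurable.comp ha)).const_mul _)
    have hfmeas : Measurable (fun t => (ψ k t - m x)^2) :=
      (hψmeas.sub measurable_const).pow_const 2
    have hfint : IntervalIntegrable (fun t => (ψ k t - m x)^2) volume 0 1 := by
      apply (_root_.intervalIntegrable_const (c := ((|d| + L)/k)^2)).mono_fun'
        hfmeas.aestronglyMeasurable.restrict
      apply ae_of_all
      intro t
      dsimp only
      rw [Real.norm_eq_abs, abs_pow, sq_abs]
      have := hψb t
      have h0 : (0:ℝ) ≤ (|d| + L)/k := by positivity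
      calc (ψ k t - m x)^2 = |ψ k t - m x|^2 := (sq_abs _).symm
        _ ≤ ((|d| + L)/k)^2 := by nlinarith [abs_nonneg (ψ k t - m x)]
    have hgmeas : Measurable (fun t : ℝ => d^2 * (1/2 - Int.fract ((k:ℝ) * x + t))^2) := by
      apply Measurable.const_mul
      exact ((measurable_const.sub ((Measurable.fract (measurable_id.const_add _)))).pow_const 2)
    have hgint : IntervalIntegrable (fun t : ℝ => d^2 * (1/2 - Int.fract ((k:ℝ) * x + t))^2)
        volume 0 1 := by
      apply (_root_.intervalIntegrable_const (c := d^2)).mono_fun' hgmeas.aestronglyMeasurable.restrict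
      apply ae_of_all
      intro t
      dsimp only
      rw [Real.norm_eq_abs]
      have := hPb t
      rw [abs_mul] at this ⊢
      calc |d^2| * |(1/2 - Int.fract ((k:ℝ)*x+t))^2|
          = (|d| * |1/2 - Int.fract ((k:ℝ)*x+t)|)^2 := by
            rw [abs_pow, abs_pow, mul_pow]
        _ ≤ |d|^2 := by nlinarith [abs_nonneg d, abs_nonneg (1/2 - Int.fract ((k:ℝ)*x+t)),
              mul_nonneg (abs_nonneg d) (abs_nonneg (1/2 - Int.fract ((k:ℝ)*x+t)))]
        _ = d^2 := sq_abs d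
    -- compute the fract integral
    have hgval : (∫ t in (0:ℝ)..1, d^2 * (1/2 - Int.fract ((k:ℝ) * x + t))^2) = d^2 / 12 := by
      rw [intervalIntegral.integral_const_mul, fract_sq_integral ((k:ℝ) * x)]
      ring
    -- assemble
    have hA : (k : ℝ)^2 * (∫ t in (0:ℝ)..1, (ψ k t - m x)^2)
        = ∫ t in (0:ℝ)..1, (k:ℝ)^2 * (ψ k t - m x)^2 :=
      (intervalIntegral.integral_const_mul _ _).symm
    rw [hA, ← hgval, ← intervalIntegral.integral_sub (hfint.const_mul _) hgint]
    have := intervalIntegral.norm_integral_le_of_norm_le_const (a := (0:ℝ)) (b := 1)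
      (C := C / k)
      (f := fun t => (k:ℝ)^2 * (ψ k t - m x)^2 - d^2 * (1/2 - Int.fract ((k:ℝ) * x + t))^2)
      (fun t _ => by rw [Real.norm_eq_abs]; exact hsq t)
    rw [Real.norm_eq_abs] at this
    simpa using this
  -- conclude
  have h0 : Tendsto (fun k : ℕ => C / (k:ℝ)) atTop (nhds 0) :=
    tendsto_const_div_atTop_nhds_zero_nat C
  have h1 : Tendsto (fun k : ℕ => ((k : ℝ) ^ 2 * ∫ t in (0 : ℝ)..1, (ψ k t - m x) ^ 2)
      - d ^ 2 / 12) atTop (nhds 0) := by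
    apply squeeze_zero_norm' _ h0
    filter_upwards [eventually_ge_atTop 1] with k hk
    rw [Real.norm_eq_abs]
    exact main k hk
  have := tendsto_sub_nhds_zero_iff.mp h1
  rw [hd] at this
  exact this
end

section
/- Let m : ℝ → ℝ be three times continuously differentiable and let x ∈ (0,1). For each integer k with 1/k ≤ x ≤ 1 − 1/k and each t ∈ [0,1], define ψ_k(x,t) := k ∫ m(u) du over the interval [(⌊kx+t⌋ − t)/k, (⌊kx+t⌋ + 1 − t)/k] (the cell containing x in the toy partition with offset t). Then lim_{k→∞} k² ( ∫_0^1 ψ_k(x,t) dt − m(x) ) = m″(x)/12. -/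
open Filter intervalIntegral

lemma step_bound {f : ℝ → ℝ} (hf : Continuous f) {c e h : ℝ} {j : ℕ} (hh : 0 ≤ h)
    (hb : ∀ v ∈ Set.Icc (0:ℝ) h, |f v - c * v ^ j| ≤ e * v ^ j)
    {c' e' : ℝ} (hc' : c = ((j:ℝ)+1) * c') (he' : e = ((j:ℝ)+1) * e') :
    |(∫ v in (0:ℝ)..h, f v) - c' * h ^ (j+1)| ≤ e' * h ^ (j+1) := by
  have hj : ((j:ℝ)+1) ≠ 0 := by positivity
  have key : ∀ a b : ℝ, a = ((j:ℝ)+1) * b →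
      (∫ v in (0:ℝ)..h, a * v ^ j) = b * h ^ (j+1) := by
    intro a b hab
    rw [intervalIntegral.integral_const_mul, integral_pow, hab]
    rw [zero_pow (Nat.succ_ne_zero j)]
    field_simp
    ring
  have h2 : (∫ v in (0:ℝ)..h, f v) - c' * h ^ (j+1)
      = ∫ v in (0:ℝ)..h, (f v - c * v ^ j) := by
    rw [intervalIntegral.integral_sub (hf.intervalIntegrable 0 h)
      ((show Continuous (fun v : ℝ => c * v ^ j) from continuous_const.mul (continuous_pow j)).intervalIntegrable 0 h), key c c' hc']
  rw [h2]
  calc |∫ v in (0:ℝ)..h, (f v - c * v ^ j)| ≤ ∫ v in (0:ℝ)..h, |f v - c * v ^ j| :=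
        intervalIntegral.abs_integral_le_integral_abs hh
    _ ≤ ∫ v in (0:ℝ)..h, e * v ^ j := by
        apply intervalIntegral.integral_mono_on hh
          ((hf.sub (continuous_const.mul (continuous_pow j))).abs.intervalIntegrable 0 h)
          ((continuous_const.mul (continuous_pow j)).intervalIntegrable 0 h) hb
    _ = e' * h ^ (j+1) := key e e' he'

/-- Bias of the infinite toy forest: for `m` of class `C³` and `x ∈ (0,1)`, with
`ψ k t` the mean of `m` over the cell containing `x` in the toy partition of mesh
`1/k` with offset `t`, `k² (∫₀¹ ψ k t dt − m(x)) → m″(x)/12` as `k → ∞`. -/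
theorem toy_infinite_forest_bias
    (m : ℝ → ℝ) (hm : ContDiff ℝ 3 m) (x : ℝ) (hx : x ∈ Set.Ioo (0 : ℝ) 1)
    (ψ : ℕ → ℝ → ℝ)
    (hψ : ψ = fun (k : ℕ) (t : ℝ) =>
      (k : ℝ) * ∫ u in (((⌊(k : ℝ) * x + t⌋ : ℝ) - t) / k)..
          (((⌊(k : ℝ) * x + t⌋ : ℝ) + 1 - t) / k), m u) :
    Tendsto (fun k : ℕ => (k : ℝ) ^ 2 * ((∫ t in (0 : ℝ)..1, ψ k t) - m x))
      atTop (nhds (deriv (deriv m) x / 12)) := by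
  have hcm : Continuous m := hm.continuous
  have hm' : ContDiff ℝ 2 (deriv m) := by
    have h3 : ContDiff ℝ ((2:ℕ∞)+1) m := by exact_mod_cast hm
    exact (contDiff_succ_iff_deriv.mp (by exact_mod_cast h3)).2.2
  have hd1 : ∀ y, HasDerivAt m (deriv m y) y :=
    fun y => (hm.differentiable (by norm_num) y).hasDerivAt
  have hc1 : Continuous (deriv m) := hm'.continuous
  have hd2 : ∀ y, HasDerivAt (deriv m) (deriv (deriv m) y) y :=
    fun y => (hm'.differentiable (by norm_num) y).hasDerivAt
  have hc2 : Continuous (deriv (deriv m)) := hm'.continuous_deriv (by norm_num)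
  -- antiderivative
  set M : ℝ → ℝ := fun u => ∫ t in x..u, m t with hM
  have hMd : ∀ u, HasDerivAt M (m u) u := fun u =>
    intervalIntegral.integral_hasDerivAt_right (hcm.intervalIntegrable x u)
      (hcm.stronglyMeasurableAtFilter _ _) hcm.continuousAt
  have hMc : Continuous M := by
    rw [continuous_iff_continuousAt]; exact fun u => (hMd u).continuousAt
  -- symmetric composition derivatives
  have hpair : ∀ (g g' : ℝ → ℝ), (∀ y, HasDerivAt g (g' y) y) → ∀ r : ℝ,
      HasDerivAt (fun r => g (x + r)) (g' (x + r)) r ∧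
      HasDerivAt (fun r => g (x - r)) (-g' (x - r)) r := by
    intro g g' hg r
    constructor
    · simpa [Function.comp_def] using (hg (x+r)).comp r ((hasDerivAt_id r).const_add x)
    · simpa [Function.comp_def] using (hg (x-r)).comp r ((hasDerivAt_id r).const_sub x)
  have hI1 : ∀ s : ℝ, (∫ r in (0:ℝ)..s, (deriv (deriv m) (x+r) + deriv (deriv m) (x-r)))
      = deriv m (x+s) - deriv m (x-s) := by
    intro s
    have h := intervalIntegral.integral_eq_sub_of_hasDerivAt
      (f := fun r => deriv m (x+r) - deriv m (x-r))
      (f' := fun r => deriv (deriv m) (x+r) + deriv (deriv m) (x-r))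
      (a := 0) (b := s)
      (fun r _ => by
        have := ((hpair _ _ hd2 r).1.sub (hpair _ _ hd2 r).2)
        rw [sub_neg_eq_add] at this; exact this)
      (((hc2.comp (continuous_const.add continuous_id)).add
        (hc2.comp (continuous_const.sub continuous_id))).intervalIntegrable 0 s)
    simpa using h
  have hI2 : ∀ w : ℝ, (∫ s in (0:ℝ)..w, (deriv m (x+s) - deriv m (x-s)))
      = m (x+w) + m (x-w) - 2 * m x := by
    intro w
    have h := intervalIntegral.integral_eq_sub_of_hasDerivAt
      (f := fun s => m (x+s) + m (x-s))
      (f' := fun s => deriv m (x+s) - deriv m (x-s))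
      (a := 0) (b := w)
      (fun s _ => by
        have := ((hpair _ _ hd1 s).1.add (hpair _ _ hd1 s).2)
        rw [← sub_eq_add_neg] at this; exact this)
      (((hc1.comp (continuous_const.add continuous_id)).sub
        (hc1.comp (continuous_const.sub continuous_id))).intervalIntegrable 0 w)
    simp at h
    linarith [h]
  have hI3 : ∀ v : ℝ, (∫ w in (0:ℝ)..v, (m (x+w) + m (x-w) - 2 * m x))
      = M (x+v) - M (x-v) - 2 * m x * v := by
    intro v
    have h := intervalIntegral.integral_eq_sub_of_hasDerivAt
      (f := fun w => M (x+w) - M (x-w) - 2 * m x * w)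
      (f' := fun w => m (x+w) + m (x-w) - 2 * m x)
      (a := 0) (b := v)
      (fun w _ => by
        have h1 := ((hpair _ _ hMd w).1.sub (hpair _ _ hMd w).2)
        have h2 := (hasDerivAt_id w).const_mul (2 * m x)
        have := h1.sub h2
        convert this using 1
        · rfl
        ring)
      (((hcm.comp (continuous_const.add continuous_id)).add
        (hcm.comp (continuous_const.sub continuous_id))|>.sub continuous_const).intervalIntegrable 0 v)
    simp at h
    linarith [h]
  have main : ∀ k : ℕ, 1 ≤ k →
      (k:ℝ)^2 * ((∫ t in (0:ℝ)..1, ψ k t) - m x)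
        = (k:ℝ)^4 * (∫ v in (0:ℝ)..(1/(k:ℝ)), (M (x+v) - M (x-v) - 2*m x*v)) := by
    intro k hk
    have hkpos : (0:ℝ) < k := by exact_mod_cast hk
    have hkne : (k:ℝ) ≠ 0 := ne_of_gt hkpos
    set n : ℤ := ⌊(k:ℝ)*x⌋ with hn
    set T : ℝ := (n:ℝ) + 1 - (k:ℝ)*x with hTdef
    have hT0 : 0 < T := by
      have := Int.lt_floor_add_one ((k:ℝ)*x); rw [hTdef]; push_cast; linarith
    have hT1 : T ≤ 1 := by
      have := Int.floor_le ((k:ℝ)*x); rw [hTdef]; push_cast; linarith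
    have hψM : ∀ t : ℝ, ψ k t = (k:ℝ) * (M (((⌊(k:ℝ)*x + t⌋ : ℝ) + 1 - t)/k)
        - M (((⌊(k:ℝ)*x + t⌋ : ℝ) - t)/k)) := by
      intro t; rw [hψ]
      simp only
      congr 1
      exact intervalIntegral.integral_eq_sub_of_hasDerivAt (fun u _ => hMd u)
        (hcm.intervalIntegrable _ _)
    have hfl1 : ∀ t : ℝ, 0 ≤ t → t < T → ⌊(k:ℝ)*x + t⌋ = n := by
      intro t h0 hT
      rw [Int.floor_eq_iff]
      have h1 := Int.floor_le ((k:ℝ)*x)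
      rw [hTdef] at hT
      constructor
      · rw [hn]; linarith
      · push_cast; rw [hn]; push_cast; linarith
    have hfl2 : ∀ t : ℝ, T ≤ t → t ≤ 1 → ⌊(k:ℝ)*x + t⌋ = n + 1 := by
      intro t h0 h1
      rw [Int.floor_eq_iff]
      have h2 := Int.lt_floor_add_one ((k:ℝ)*x)
      rw [hTdef] at h0
      constructor
      · push_cast; linarith
      · push_cast; rw [hn] at *; linarith
    set f₁ : ℝ → ℝ := fun t => (k:ℝ) * (M (((n:ℝ) + 1 - t)/k) - M (((n:ℝ) - t)/k)) with hf₁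
    set f₂ : ℝ → ℝ := fun t => (k:ℝ) * (M (((n:ℝ) + 1 + 1 - t)/k) - M (((n:ℝ) + 1 - t)/k)) with hf₂
    have hcf₁ : Continuous f₁ :=
      continuous_const.mul ((hMc.comp ((continuous_const.sub continuous_id).div_const _)).sub
        (hMc.comp ((continuous_const.sub continuous_id).div_const _)))
    have hcf₂ : Continuous f₂ :=
      continuous_const.mul ((hMc.comp ((continuous_const.sub continuous_id).div_const _)).sub
        (hMc.comp ((continuous_const.sub continuous_id).div_const _)))
    have heq1 : ∀ t ∈ Set.Ioo (0:ℝ) T, ψ k t = f₁ t := by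
      intro t ht
      rw [hψM t, hfl1 t ht.1.le ht.2]
    have heq2 : ∀ t ∈ Set.Icc T 1, ψ k t = f₂ t := by
      intro t ht
      rw [hψM t, hfl2 t ht.1 ht.2, hf₂]
      push_cast
      ring_nf
    have haeT : ∀ᵐ t : ℝ ∂MeasureTheory.volume, t ≠ T := by
      rw [MeasureTheory.ae_iff]
      have he : {a : ℝ | ¬ a ≠ T} = {T} := by ext a; simp
      rw [he]
      exact Real.volume_singleton
    have hae1 : ∀ᵐ t ∂MeasureTheory.volume, t ∈ Set.uIoc (0:ℝ) T → ψ k t = f₁ t := by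
      filter_upwards [haeT] with t hne hmem
      rw [Set.uIoc_of_le hT0.le] at hmem
      exact heq1 t ⟨hmem.1, lt_of_le_of_ne hmem.2 hne⟩
    have hint1 : IntervalIntegrable (ψ k) MeasureTheory.volume 0 T := by
      rw [intervalIntegrable_iff]
      apply (intervalIntegrable_iff.mp (hcf₁.intervalIntegrable 0 T)).congr_fun_ae
      exact (MeasureTheory.ae_restrict_iff' measurableSet_uIoc).2
        (hae1.mono fun t h ht => (h ht).symm)
    have hint2 : IntervalIntegrable (ψ k) MeasureTheory.volume T 1 := by
      rw [intervalIntegrable_iff]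
      apply (intervalIntegrable_iff.mp (hcf₂.intervalIntegrable T 1)).congr_fun
        (fun t ht => ?_) measurableSet_uIoc
      rw [Set.uIoc_of_le hT1] at ht
      exact (heq2 t ⟨ht.1.le, ht.2⟩).symm
    have split : (∫ t in (0:ℝ)..1, ψ k t)
        = (∫ t in (0:ℝ)..T, ψ k t) + ∫ t in T..1, ψ k t :=
      (intervalIntegral.integral_add_adjacent_intervals hint1 hint2).symm
    have e1 : (∫ t in (0:ℝ)..T, ψ k t) = ∫ t in (0:ℝ)..T, f₁ t :=
      intervalIntegral.integral_congr_ae hae1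
    have e2 : (∫ t in T..1, ψ k t) = ∫ t in T..1, f₂ t :=
      intervalIntegral.integral_congr fun t ht => heq2 t (by rwa [Set.uIcc_of_le hT1] at ht)
    -- composition formula
    have comp : ∀ a b C : ℝ, (∫ t in a..b, M ((C - t)/(k:ℝ)))
        = (k:ℝ) * ∫ u in (C - b)/(k:ℝ)..(C - a)/(k:ℝ), M u := by
      intro a b C
      have ha : ∀ y : ℝ, (-((k:ℝ)⁻¹)) * y + C/(k:ℝ) = (C - y)/(k:ℝ) := by
        intro y; field_simp; ring
      have hfun : (fun t : ℝ => M ((C - t)/(k:ℝ)))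
          = fun t => M ((-((k:ℝ)⁻¹)) * t + C/(k:ℝ)) := by
        funext t; rw [ha]
      rw [hfun, intervalIntegral.integral_comp_mul_add M
        (neg_ne_zero.mpr (inv_ne_zero hkne)) (C/(k:ℝ))]
      rw [ha a, ha b, show (-((k:ℝ)⁻¹))⁻¹ = -(k:ℝ) by rw [inv_neg, inv_inv],
          intervalIntegral.integral_symm ((C - a)/(k:ℝ)) ((C - b)/(k:ℝ))]
      simp [smul_eq_mul]
    have cA : Continuous (fun t : ℝ => M (((n:ℝ)+1-t)/(k:ℝ))) :=
      hMc.comp ((continuous_const.sub continuous_id).div_const _)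
    have cB : Continuous (fun t : ℝ => M (((n:ℝ)-t)/(k:ℝ))) :=
      hMc.comp ((continuous_const.sub continuous_id).div_const _)
    have cC : Continuous (fun t : ℝ => M (((n:ℝ)+1+1-t)/(k:ℝ))) :=
      hMc.comp ((continuous_const.sub continuous_id).div_const _)
    have cP : Continuous (fun v : ℝ => M (x+v)) := hMc.comp (continuous_const.add continuous_id)
    have cQ : Continuous (fun v : ℝ => M (x-v)) := hMc.comp (continuous_const.sub continuous_id)
    have cL : Continuous (fun v : ℝ => 2*m x*v) := continuous_const.mul continuous_id
    have e3 : (∫ t in (0:ℝ)..T, f₁ t)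
        = (k:ℝ) * ((k:ℝ) * (∫ u in x..(((n:ℝ)+1)/(k:ℝ)), M u)
            - (k:ℝ) * (∫ u in (x - 1/(k:ℝ))..((n:ℝ)/(k:ℝ)), M u)) := by
      rw [hf₁]
      simp only
      rw [intervalIntegral.integral_const_mul,
        intervalIntegral.integral_sub (cA.intervalIntegrable 0 T)
          (cB.intervalIntegrable 0 T),
        comp 0 T ((n:ℝ)+1), comp 0 T (n:ℝ),
        show ((n:ℝ)+1 - T)/(k:ℝ) = x by rw [hTdef]; field_simp; ring,
        show ((n:ℝ)+1 - 0)/(k:ℝ) = ((n:ℝ)+1)/(k:ℝ) by norm_num,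
        show ((n:ℝ) - T)/(k:ℝ) = x - 1/(k:ℝ) by rw [hTdef]; field_simp; ring,
        show ((n:ℝ) - 0)/(k:ℝ) = (n:ℝ)/(k:ℝ) by norm_num]
    have e4 : (∫ t in T..1, f₂ t)
        = (k:ℝ) * ((k:ℝ) * (∫ u in (((n:ℝ)+1)/(k:ℝ))..(x + 1/(k:ℝ)), M u)
            - (k:ℝ) * (∫ u in ((n:ℝ)/(k:ℝ))..x, M u)) := by
      rw [hf₂]
      simp only
      rw [intervalIntegral.integral_const_mul,
        intervalIntegral.integral_sub (cC.intervalIntegrable T 1)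
          (cA.intervalIntegrable T 1),
        comp T 1 ((n:ℝ)+1+1), comp T 1 ((n:ℝ)+1),
        show ((n:ℝ)+1+1 - 1)/(k:ℝ) = ((n:ℝ)+1)/(k:ℝ) by ring_nf,
        show ((n:ℝ)+1+1 - T)/(k:ℝ) = x + 1/(k:ℝ) by rw [hTdef]; field_simp; ring,
        show ((n:ℝ)+1 - 1)/(k:ℝ) = (n:ℝ)/(k:ℝ) by ring_nf,
        show ((n:ℝ)+1 - T)/(k:ℝ) = x by rw [hTdef]; field_simp; ring]
    have hAC : (∫ u in x..(((n:ℝ)+1)/(k:ℝ)), M u)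
        + (∫ u in (((n:ℝ)+1)/(k:ℝ))..(x + 1/(k:ℝ)), M u) = ∫ u in x..(x + 1/(k:ℝ)), M u :=
      intervalIntegral.integral_add_adjacent_intervals (hMc.intervalIntegrable _ _)
        (hMc.intervalIntegrable _ _)
    have hBD : (∫ u in (x - 1/(k:ℝ))..((n:ℝ)/(k:ℝ)), M u)
        + (∫ u in ((n:ℝ)/(k:ℝ))..x, M u) = ∫ u in (x - 1/(k:ℝ))..x, M u :=
      intervalIntegral.integral_add_adjacent_intervals (hMc.intervalIntegrable _ _)
        (hMc.intervalIntegrable _ _)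
    have total : (∫ t in (0:ℝ)..1, ψ k t)
        = (k:ℝ)^2 * ((∫ u in x..(x + 1/(k:ℝ)), M u) - (∫ u in (x - 1/(k:ℝ))..x, M u)) := by
      rw [split, e1, e2, e3, e4, ← hAC, ← hBD]; ring
    have hplus : (∫ v in (0:ℝ)..(1/(k:ℝ)), M (x+v)) = ∫ u in x..(x + 1/(k:ℝ)), M u := by
      rw [intervalIntegral.integral_comp_add_left M x]; norm_num
    have hminus : (∫ v in (0:ℝ)..(1/(k:ℝ)), M (x-v)) = ∫ u in (x - 1/(k:ℝ))..x, M u := by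
      rw [intervalIntegral.integral_comp_sub_left M x]; norm_num
    have hsub : (∫ v in (0:ℝ)..(1/(k:ℝ)), (M (x+v) - M (x-v)))
        = (∫ v in (0:ℝ)..(1/(k:ℝ)), M (x+v)) - (∫ v in (0:ℝ)..(1/(k:ℝ)), M (x-v)) :=
      intervalIntegral.integral_sub (cP.intervalIntegrable _ _)
        (cQ.intervalIntegrable _ _)
    have hlin : (∫ v in (0:ℝ)..(1/(k:ℝ)), (M (x+v) - M (x-v) - 2*m x*v))
        = (∫ v in (0:ℝ)..(1/(k:ℝ)), (M (x+v) - M (x-v))) - m x * (1/(k:ℝ))^2 := by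
      rw [intervalIntegral.integral_sub
        ((show Continuous (fun v : ℝ => M (x+v) - M (x-v)) from cP.sub cQ).intervalIntegrable _ _)
        (cL.intervalIntegrable _ _),
        intervalIntegral.integral_const_mul, integral_id]
      ring
    rw [total, ← hplus, ← hminus, ← hsub, hlin]
    field_simp
  have hlim : Tendsto
      (fun k : ℕ => (k:ℝ)^4 * (∫ v in (0:ℝ)..(1/(k:ℝ)), (M (x+v) - M (x-v) - 2*m x*v)))
      atTop (nhds (deriv (deriv m) x / 12)) := by
    have cG0 : Continuous (fun r : ℝ => deriv (deriv m) (x+r) + deriv (deriv m) (x-r)) :=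
      (hc2.comp (continuous_const.add continuous_id)).add
        (hc2.comp (continuous_const.sub continuous_id))
    have cG1 : Continuous (fun s : ℝ => deriv m (x+s) - deriv m (x-s)) :=
      (hc1.comp (continuous_const.add continuous_id)).sub
        (hc1.comp (continuous_const.sub continuous_id))
    have cG2 : Continuous (fun w : ℝ => m (x+w) + m (x-w) - 2 * m x) :=
      ((hcm.comp (continuous_const.add continuous_id)).add
        (hcm.comp (continuous_const.sub continuous_id))).sub continuous_const
    have cG3 : Continuous (fun v : ℝ => M (x+v) - M (x-v) - 2 * m x * v) :=
      ((hMc.comp (continuous_const.add continuous_id)).sub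
        (hMc.comp (continuous_const.sub continuous_id))).sub
        (continuous_const.mul continuous_id)
    rw [Metric.tendsto_atTop]
    intro ε hε
    obtain ⟨δ, hδ0, hδ⟩ := Metric.continuousAt_iff.mp hc2.continuousAt (6*ε) (by positivity)
    obtain ⟨N, hN⟩ := exists_nat_gt (1/δ)
    refine ⟨N+1, fun k hk => ?_⟩
    have hk1 : (1:ℕ) ≤ k := le_trans (Nat.le_add_left 1 N) hk
    have hkpos : (0:ℝ) < k := by exact_mod_cast hk1
    set h : ℝ := 1/(k:ℝ) with hh
    have hh0 : 0 < h := by rw [hh]; positivity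
    have hNk : (1:ℝ)/δ < (k:ℝ) := lt_of_lt_of_le hN (by exact_mod_cast Nat.le_of_succ_le hk)
    have hhδ : h < δ := by
      rw [hh, div_lt_iff₀ hkpos]
      rw [div_lt_iff₀ hδ0] at hNk
      nlinarith
    have B0 : ∀ r ∈ Set.Icc (0:ℝ) h,
        |(deriv (deriv m) (x+r) + deriv (deriv m) (x-r)) - (2*deriv (deriv m) x) * r^0|
          ≤ (12*ε) * r^0 := by
      intro r hr
      have d1 : dist (x+r) x < δ := by
        rw [Real.dist_eq, show x + r - x = r by ring, abs_of_nonneg hr.1]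
        linarith [hr.2]
      have d2 : dist (x-r) x < δ := by
        rw [Real.dist_eq, show x - r - x = -r by ring, abs_neg, abs_of_nonneg hr.1]
        linarith [hr.2]
      have h1 := hδ d1
      have h2 := hδ d2
      rw [Real.dist_eq] at h1 h2
      simp only [pow_zero, mul_one]
      have e1 := abs_add_le (deriv (deriv m) (x+r) - deriv (deriv m) x)
        (deriv (deriv m) (x-r) - deriv (deriv m) x)
      rw [show (deriv (deriv m) (x+r) + deriv (deriv m) (x-r)) - 2*deriv (deriv m) x
        = (deriv (deriv m) (x+r) - deriv (deriv m) x)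
          + (deriv (deriv m) (x-r) - deriv (deriv m) x) by ring]
      linarith [abs_sub_lt_iff.mp h1, abs_sub_lt_iff.mp h2, e1, h1, h2]
    have B1 : ∀ s ∈ Set.Icc (0:ℝ) h,
        |(deriv m (x+s) - deriv m (x-s)) - (2*deriv (deriv m) x) * s^1| ≤ (12*ε) * s^1 := by
      intro s hs
      have hb := step_bound cG0 hs.1 (fun r hr => B0 r ⟨hr.1, hr.2.trans hs.2⟩)
        (c' := 2*deriv (deriv m) x) (e' := 12*ε) (by norm_num) (by norm_num)
      rw [hI1 s] at hb
      simpa using hb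
    have B2 : ∀ w ∈ Set.Icc (0:ℝ) h,
        |(m (x+w) + m (x-w) - 2*m x) - (deriv (deriv m) x) * w^2| ≤ (6*ε) * w^2 := by
      intro w hw
      have hb := step_bound cG1 hw.1 (fun s hs => B1 s ⟨hs.1, hs.2.trans hw.2⟩)
        (c' := deriv (deriv m) x) (e' := 6*ε) (by push_cast; ring) (by push_cast; ring)
      rw [hI2 w] at hb
      simpa using hb
    have B3 : ∀ v ∈ Set.Icc (0:ℝ) h,
        |(M (x+v) - M (x-v) - 2*m x*v) - (deriv (deriv m) x/3) * v^3| ≤ (2*ε) * v^3 := by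
      intro v hv
      have hb := step_bound cG2 hv.1 (fun w hw => B2 w ⟨hw.1, hw.2.trans hv.2⟩)
        (c' := deriv (deriv m) x/3) (e' := 2*ε) (by push_cast; ring) (by push_cast; ring)
      rw [hI3 v] at hb
      simpa using hb
    have B4 : |(∫ v in (0:ℝ)..h, (M (x+v) - M (x-v) - 2*m x*v))
        - (deriv (deriv m) x/12) * h^4| ≤ (ε/2) * h^4 := by
      have hb := step_bound cG3 hh0.le B3
        (c' := deriv (deriv m) x/12) (e' := ε/2) (by push_cast; ring) (by push_cast; ring)
      simpa using hb
    show |(k:ℝ)^4 * (∫ v in (0:ℝ)..h, (M (x+v) - M (x-v) - 2*m x*v))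
        - deriv (deriv m) x / 12| < ε
    have hkne : (k:ℝ) ≠ 0 := ne_of_gt hkpos
    have key : (k:ℝ)^4 * (∫ v in (0:ℝ)..h, (M (x+v) - M (x-v) - 2*m x*v))
          - deriv (deriv m) x / 12
        = (k:ℝ)^4 * ((∫ v in (0:ℝ)..h, (M (x+v) - M (x-v) - 2*m x*v))
          - (deriv (deriv m) x/12) * h^4) := by
      rw [hh, mul_sub, mul_comm ((deriv (deriv m) x)/12), ← mul_assoc, ← mul_pow,
        mul_one_div_cancel hkne, one_pow, one_mul]
    rw [key, abs_mul, abs_of_pos (by positivity : (0:ℝ) < (k:ℝ)^4)]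
    calc (k:ℝ)^4 * |(∫ v in (0:ℝ)..h, (M (x+v) - M (x-v) - 2*m x*v))
          - (deriv (deriv m) x/12) * h^4|
        ≤ (k:ℝ)^4 * ((ε/2) * h^4) := mul_le_mul_of_nonneg_left B4 (by positivity)
      _ = ε/2 := by rw [hh]; field_simp
      _ < ε := by linarith
  exact hlim.congr' (eventually_atTop.mpr ⟨1, fun k hk => (main k hk).symm⟩)
end

section
/- Let m : ℝ → ℝ be three times continuously differentiable and let x ∈ (0,1). For each integer k with 1/k ≤ x ≤ 1 − 1/k and each t ∈ [0,1], define ψ_k(x,t) := k ∫ m(u) du over the interval [(⌊kx+t⌋ − t)/k, (⌊kx+t⌋ + 1 − t)/k] (the cell containing x in the toy partition with offset t). Then lim_{k→∞} k⁴ ( ∫_0^1 ψ_k(x,t) dt − m(x) )² = m″(x)²/144; that is, the approximation error of the infinite toy forest at x is asymptotically c_2(m,x)/k⁴ with c_2(m,x) = m″(x)²/144. -/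
open Filter intervalIntegral MeasureTheory

private lemma subst_comp (F : ℝ → ℝ) (k : ℝ) (hk : k ≠ 0) (d a b : ℝ) :
    (∫ t in a..b, F ((d - t) / k)) = k * ∫ u in (d - b) / k..(d - a) / k, F u := by
  have h1 : (∫ t in a..b, (fun s => F (s / k)) (d - t))
      = ∫ s in (d - b)..(d - a), F (s / k) :=
    intervalIntegral.integral_comp_sub_left (fun s => F (s / k)) d
  have h2 : (∫ s in (d - b)..(d - a), F (s / k))
      = k • ∫ u in (d - b) / k..(d - a) / k, F u :=
    intervalIntegral.integral_comp_div F hk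
  simpa [smul_eq_mul] using h1.trans h2

private lemma key_identity (m : ℝ → ℝ) (hmc : Continuous m) (x : ℝ) (k : ℕ) (hk : 1 ≤ k)
    (F : ℝ → ℝ) (hF : F = fun y => ∫ v in x..y, m v) :
    (∫ t in (0:ℝ)..1, (k:ℝ) * ∫ u in (((⌊(k : ℝ) * x + t⌋ : ℝ) - t) / k)..
        (((⌊(k : ℝ) * x + t⌋ : ℝ) + 1 - t) / k), m u)
    = (k:ℝ)^2 * ((∫ u in x..(x + 1/k), F u) - ∫ u in (x - 1/k)..x, F u) := by
  have hK : (0:ℝ) < k := by exact_mod_cast hk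
  have hKne : (k:ℝ) ≠ 0 := ne_of_gt hK
  have hFd : ∀ y, HasDerivAt F (m y) y := by
    intro y; rw [hF]
    exact intervalIntegral.integral_hasDerivAt_right (hmc.intervalIntegrable _ _)
      (hmc.stronglyMeasurableAtFilter _ _) hmc.continuousAt
  have hFdiff : Differentiable ℝ F := fun y => (hFd y).differentiableAt
  have hFc : Continuous F := hFdiff.continuous
  have hFsub : ∀ a b : ℝ, (∫ u in a..b, m u) = F b - F a := by
    intro a b; rw [hF]
    exact (intervalIntegral.integral_interval_sub_left
      (hmc.intervalIntegrable x b) (hmc.intervalIntegrable x a)).symm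
  set n : ℤ := ⌊(k:ℝ) * x⌋ with hn
  set θ : ℝ := Int.fract ((k:ℝ) * x) with hθ
  have hθ0 : 0 ≤ θ := Int.fract_nonneg _
  have hθ1 : θ < 1 := Int.fract_lt_one _
  have hnθ : (n:ℝ) + θ = (k:ℝ) * x := Int.floor_add_fract _
  have h1θ0 : (0:ℝ) ≤ 1 - θ := by linarith
  have h1θ1 : (1:ℝ) - θ ≤ 1 := by linarith
  set g1 : ℝ → ℝ := fun t => (k:ℝ) * (F (((n:ℝ) + 1 - t)/k) - F (((n:ℝ) - t)/k)) with hg1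
  set g2 : ℝ → ℝ := fun t => (k:ℝ) * (F (((n:ℝ) + 2 - t)/k) - F (((n:ℝ) + 1 - t)/k)) with hg2
  have hg1c : Continuous g1 := by
    apply continuous_const.mul
    exact (hFc.comp ((continuous_const.sub continuous_id).div_const _)).sub
      (hFc.comp ((continuous_const.sub continuous_id).div_const _))
  have hg2c : Continuous g2 := by
    apply continuous_const.mul
    exact (hFc.comp ((continuous_const.sub continuous_id).div_const _)).sub
      (hFc.comp ((continuous_const.sub continuous_id).div_const _))
  set p : ℝ → ℝ := fun t => if θ + t < 1 then g1 t else g2 t with hp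
  -- the integrand equals p on [0,1]
  have hEq : Set.EqOn (fun t => (k:ℝ) * ∫ u in (((⌊(k : ℝ) * x + t⌋ : ℝ) - t) / k)..
      (((⌊(k : ℝ) * x + t⌋ : ℝ) + 1 - t) / k), m u) p (Set.uIcc (0:ℝ) 1) := by
    intro t ht
    rw [Set.uIcc_of_le zero_le_one] at ht
    obtain ⟨ht0, ht1⟩ := ht
    have hsplit : (k:ℝ)*x + t = (n:ℝ) + (θ + t) := by linarith
    by_cases hc : θ + t < 1
    · have hfl : ⌊(k:ℝ)*x + t⌋ = n := by
        rw [hsplit, Int.floor_intCast_add, Int.floor_eq_zero_iff.mpr ⟨by linarith, hc⟩, add_zero]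
      show (k:ℝ) * ∫ u in _.._, m u = p t
      rw [hp]
      simp only [hfl, if_pos hc, hg1]
      rw [hFsub]
    · have h2 : (1:ℝ) ≤ θ + t := not_lt.mp hc
      have hfl : ⌊(k:ℝ)*x + t⌋ = n + 1 := by
        rw [hsplit, Int.floor_intCast_add]
        have h3 : ⌊θ + t⌋ = 1 := by
          rw [Int.floor_eq_iff]
          constructor
          · push_cast; linarith
          · push_cast; linarith
        rw [h3]
      show (k:ℝ) * ∫ u in _.._, m u = p t
      rw [hp]
      simp only [hfl, if_neg hc, hg2]
      rw [hFsub]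
      push_cast
      ring_nf
  -- a.e. equality of p with g1 on the first interval
  have hmaster : ∀ᵐ t ∂(volume : Measure ℝ), t ∈ Set.Ioc (0:ℝ) (1-θ) → p t = g1 t := by
    filter_upwards [compl_mem_ae_iff.mpr (measure_singleton ((1:ℝ)-θ))] with t ht hmem
    have htne : t ≠ 1 - θ := by simpa using ht
    have : t < 1 - θ := lt_of_le_of_ne hmem.2 htne
    rw [hp]; simp only [if_pos (by linarith : θ + t < 1)]
  have hIoc : Set.uIoc (0:ℝ) (1-θ) = Set.Ioc 0 (1-θ) := Set.uIoc_of_le h1θ0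
  have hae1 : g1 =ᵐ[volume.restrict (Set.Ioc (0:ℝ) (1-θ))] p := by
    rw [Filter.EventuallyEq, ae_restrict_iff' measurableSet_Ioc]
    filter_upwards [hmaster] with t ht hmem
    exact (ht hmem).symm
  have hint1 : IntervalIntegrable p volume 0 (1 - θ) := by
    rw [intervalIntegrable_iff, hIoc]
    have h1i : IntervalIntegrable g1 volume 0 (1-θ) := hg1c.intervalIntegrable 0 (1-θ)
    rw [intervalIntegrable_iff, hIoc] at h1i
    exact h1i.congr hae1
  have hEq2 : Set.EqOn p g2 (Set.uIcc (1-θ) 1) := by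
    intro t ht
    rw [Set.uIcc_of_le h1θ1] at ht
    rw [hp]; simp only [if_neg (by push_neg; linarith [ht.1] : ¬ (θ + t < 1))]
  have hint2 : IntervalIntegrable p volume (1 - θ) 1 := by
    rw [intervalIntegrable_iff]
    have h : IntervalIntegrable g2 volume (1-θ) 1 := hg2c.intervalIntegrable (1-θ) 1
    rw [intervalIntegrable_iff] at h
    refine h.congr ?_
    refine (ae_restrict_iff' measurableSet_uIoc).mpr (Filter.Eventually.of_forall fun t ht => ?_)
    exact (hEq2 (Set.uIoc_subset_uIcc ht)).symm
  -- endpoint arithmetic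
  have ep1 : ((n:ℝ)+1-(1-θ))/k = x := by
    rw [show (n:ℝ)+1-(1-θ) = (k:ℝ)*x by linarith]; field_simp
  have ep2 : ((n:ℝ)-(1-θ))/k = x - 1/k := by
    rw [show (n:ℝ)-(1-θ) = (k:ℝ)*x - 1 by linarith]; field_simp
  have ep4 : ((n:ℝ)+2-(1-θ))/k = x + 1/k := by
    rw [show (n:ℝ)+2-(1-θ) = (k:ℝ)*x + 1 by linarith]; field_simp
  have i1 : IntervalIntegrable (fun t => F (((n:ℝ) + 1 - t)/k)) volume 0 (1-θ) :=
    (hFc.comp ((continuous_const.sub continuous_id).div_const _)).intervalIntegrable _ _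
  have i2 : IntervalIntegrable (fun t => F (((n:ℝ) - t)/k)) volume 0 (1-θ) :=
    (hFc.comp ((continuous_const.sub continuous_id).div_const _)).intervalIntegrable _ _
  have i3 : IntervalIntegrable (fun t => F (((n:ℝ) + 2 - t)/k)) volume (1-θ) 1 :=
    (hFc.comp ((continuous_const.sub continuous_id).div_const _)).intervalIntegrable _ _
  have i4 : IntervalIntegrable (fun t => F (((n:ℝ) + 1 - t)/k)) volume (1-θ) 1 :=
    (hFc.comp ((continuous_const.sub continuous_id).div_const _)).intervalIntegrable _ _
  have e1 : ∫ t in (0:ℝ)..(1-θ), p t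
      = (k:ℝ)^2 * ((∫ u in x..(((n:ℝ)+1)/k), F u) - (∫ u in (x - 1/k)..((n:ℝ)/k), F u)) := by
    have hcong : ∫ t in (0:ℝ)..(1-θ), p t = ∫ t in (0:ℝ)..(1-θ), g1 t :=
      intervalIntegral.integral_congr_ae (hIoc ▸ hmaster)
    rw [hcong, hg1]
    rw [intervalIntegral.integral_const_mul, intervalIntegral.integral_sub i1 i2,
      subst_comp F (k:ℝ) hKne ((n:ℝ)+1) 0 (1-θ), subst_comp F (k:ℝ) hKne (n:ℝ) 0 (1-θ),
      ep1, ep2]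
    simp only [sub_zero]
    ring
  have e2 : ∫ t in (1-θ)..(1:ℝ), p t
      = (k:ℝ)^2 * ((∫ u in (((n:ℝ)+1)/k)..(x + 1/k), F u) - (∫ u in ((n:ℝ)/k)..x, F u)) := by
    rw [intervalIntegral.integral_congr hEq2, hg2]
    rw [intervalIntegral.integral_const_mul, intervalIntegral.integral_sub i3 i4,
      subst_comp F (k:ℝ) hKne ((n:ℝ)+2) (1-θ) 1, subst_comp F (k:ℝ) hKne ((n:ℝ)+1) (1-θ) 1,
      ep1, ep4,
      show ((n:ℝ)+2-1)/k = ((n:ℝ)+1)/k by ring_nf,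
      show ((n:ℝ)+1-1)/k = (n:ℝ)/k by ring_nf]
    ring
  have a1 : (∫ u in x..(((n:ℝ)+1)/k), F u) + (∫ u in (((n:ℝ)+1)/k)..(x+1/k), F u)
      = ∫ u in x..(x+1/k), F u :=
    intervalIntegral.integral_add_adjacent_intervals (hFc.intervalIntegrable _ _)
      (hFc.intervalIntegrable _ _)
  have a2 : (∫ u in (x-1/k)..((n:ℝ)/k), F u) + (∫ u in ((n:ℝ)/k)..x, F u)
      = ∫ u in (x-1/k)..x, F u :=
    intervalIntegral.integral_add_adjacent_intervals (hFc.intervalIntegrable _ _)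
      (hFc.intervalIntegrable _ _)
  rw [intervalIntegral.integral_congr hEq,
    ← intervalIntegral.integral_add_adjacent_intervals hint1 hint2, e1, e2]
  linear_combination (k:ℝ)^2 * a1 - (k:ℝ)^2 * a2

private lemma hasDerivAt_integral_right' (f : ℝ → ℝ) (hf : Continuous f) (x h : ℝ) :
    HasDerivAt (fun h : ℝ => ∫ u in x..(x + h), f u) (f (x + h)) h :=
  (intervalIntegral.integral_hasDerivAt_right (hf.intervalIntegrable _ _)
    (hf.stronglyMeasurableAtFilter _ _) hf.continuousAt).comp_const_add x h

private lemma hasDerivAt_integral_left' (f : ℝ → ℝ) (hf : Continuous f) (x h : ℝ) :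
    HasDerivAt (fun h : ℝ => ∫ u in (x - h)..x, f u) (f (x - h)) h := by
  have H : HasDerivAt (fun h : ℝ => ∫ u in x..(x - h), f u) (-(f (x - h))) h :=
    (intervalIntegral.integral_hasDerivAt_right (hf.intervalIntegrable _ _)
      (hf.stronglyMeasurableAtFilter _ _) hf.continuousAt).comp_const_sub x h
  have e : (fun h : ℝ => ∫ u in (x - h)..x, f u)
      = fun h : ℝ => -∫ u in x..(x - h), f u := by
    funext h; exact intervalIntegral.integral_symm _ _
  rw [e]
  have H2 := H.neg
  rw [neg_neg] at H2
  exact H2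

private lemma taylor_limit (m : ℝ → ℝ) (hm : ContDiff ℝ 3 m) (x : ℝ)
    (F : ℝ → ℝ) (hF : F = fun y => ∫ v in x..y, m v) :
    Tendsto (fun h : ℝ =>
        (((∫ u in x..(x + h), F u) - ∫ u in (x - h)..x, F u) - h ^ 2 * m x) / h ^ 4)
      (nhdsWithin 0 (Set.Ioi 0)) (nhds (deriv (deriv m) x / 12)) := by
  have hmc : Continuous m := hm.continuous
  have hm1 : Differentiable ℝ m := hm.differentiable (by norm_num)
  have h3 : (3 : WithTop ℕ∞) = 2 + 1 := by norm_num
  rw [h3] at hm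
  have hm2 : ContDiff ℝ 2 (deriv m) := (contDiff_succ_iff_deriv.mp hm).2.2
  have hm2d : Differentiable ℝ (deriv m) := hm2.differentiable (by norm_num)
  have hmdc : Continuous (deriv m) := hm2.continuous
  have hFd : ∀ y, HasDerivAt F (m y) y := by
    intro y; rw [hF]
    exact intervalIntegral.integral_hasDerivAt_right (hmc.intervalIntegrable _ _)
      (hmc.stronglyMeasurableAtFilter _ _) hmc.continuousAt
  have hFdiff : Differentiable ℝ F := fun y => (hFd y).differentiableAt
  have hFc : Continuous F := hFdiff.continuous
  have hpos : ∀ᶠ h : ℝ in nhdsWithin 0 (Set.Ioi 0), (0:ℝ) < h := self_mem_nhdsWithin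
  -- Step 3 : innermost limit
  have hφ : HasDerivAt (fun h : ℝ => deriv m (x + h) - deriv m (x - h))
      (2 * deriv (deriv m) x) 0 := by
    have h1 : HasDerivAt (fun h : ℝ => deriv m (x + h)) (deriv (deriv m) (x + 0)) 0 :=
      ((hm2d (x + 0)).hasDerivAt).comp_const_add x 0
    have h2 : HasDerivAt (fun h : ℝ => deriv m (x - h)) (-(deriv (deriv m) (x - 0))) 0 :=
      ((hm2d (x - 0)).hasDerivAt).comp_const_sub x 0
    have h12 := h1.sub h2
    norm_num at h12
    rw [show 2 * deriv (deriv m) x = deriv (deriv m) x + deriv (deriv m) x by ring]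
    exact h12
  have T3 : Tendsto (fun h : ℝ => (deriv m (x + h) - deriv m (x - h)) / (24 * h))
      (nhdsWithin 0 (Set.Ioi 0)) (nhds (deriv (deriv m) x / 12)) := by
    have hs := hasDerivAt_iff_tendsto_slope.mp hφ
    have hmono : nhdsWithin (0:ℝ) (Set.Ioi 0) ≤ nhdsWithin 0 {(0:ℝ)}ᶜ :=
      nhdsWithin_mono _ (fun h hh => ne_of_gt hh)
    have hs2 : Tendsto (fun h : ℝ => (deriv m (x + h) - deriv m (x - h)) / h)
        (nhdsWithin 0 (Set.Ioi 0)) (nhds (2 * deriv (deriv m) x)) := by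
      refine (hs.mono_left hmono).congr fun h => ?_
      rw [slope_def_field]
      norm_num
    have hd := hs2.div_const 24
    have heq : (2 * deriv (deriv m) x) / 24 = deriv (deriv m) x / 12 := by ring
    rw [heq] at hd
    refine hd.congr fun h => ?_
    rw [div_div, mul_comm]
  -- Step 2
  have T2 : Tendsto (fun h : ℝ => (m (x + h) + m (x - h) - 2 * m x) / (12 * h ^ 2))
      (nhdsWithin 0 (Set.Ioi 0)) (nhds (deriv (deriv m) x / 12)) := by
    refine HasDerivAt.lhopital_zero_nhdsGT
      (f' := fun h : ℝ => deriv m (x + h) - deriv m (x - h))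
      (g' := fun h : ℝ => 24 * h) ?_ ?_ ?_ ?_ ?_ T3
    · refine Eventually.of_forall fun h => ?_
      have h1 : HasDerivAt (fun h : ℝ => m (x + h)) (deriv m (x + h)) h :=
        ((hm1 (x + h)).hasDerivAt).comp_const_add x h
      have h2 : HasDerivAt (fun h : ℝ => m (x - h)) (-(deriv m (x - h))) h :=
        ((hm1 (x - h)).hasDerivAt).comp_const_sub x h
      simpa [sub_eq_add_neg] using (h1.add h2).sub_const (2 * m x)
    · refine Eventually.of_forall fun h => ?_
      exact ((hasDerivAt_pow 2 h).const_mul (12 : ℝ)).congr_deriv (by push_cast; ring)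
    · filter_upwards [hpos] with h hh
      exact ne_of_gt (by positivity)
    · have hc : Continuous fun h : ℝ => m (x + h) + m (x - h) - 2 * m x :=
        ((hmc.comp (continuous_const.add continuous_id)).add
          (hmc.comp (continuous_const.sub continuous_id))).sub continuous_const
      have ht := (hc.tendsto 0).mono_left (nhdsWithin_le_nhds (s := Set.Ioi (0:ℝ)))
      have h0 : m (x + 0) + m (x - 0) - 2 * m x = 0 := by norm_num; ring
      rwa [h0] at ht
    · have hc : Continuous fun h : ℝ => 12 * h ^ 2 := by continuity
      have ht := (hc.tendsto 0).mono_left (nhdsWithin_le_nhds (s := Set.Ioi (0:ℝ)))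
      norm_num at ht
      exact ht
  -- Step 1
  have T1 : Tendsto (fun h : ℝ => (F (x + h) - F (x - h) - 2 * h * m x) / (4 * h ^ 3))
      (nhdsWithin 0 (Set.Ioi 0)) (nhds (deriv (deriv m) x / 12)) := by
    refine HasDerivAt.lhopital_zero_nhdsGT
      (f' := fun h : ℝ => m (x + h) + m (x - h) - 2 * m x)
      (g' := fun h : ℝ => 12 * h ^ 2) ?_ ?_ ?_ ?_ ?_ T2
    · refine Eventually.of_forall fun h => ?_
      have h1 : HasDerivAt (fun h : ℝ => F (x + h)) (m (x + h)) h :=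
        (hFd (x + h)).comp_const_add x h
      have h2 : HasDerivAt (fun h : ℝ => F (x - h)) (-(m (x - h))) h :=
        (hFd (x - h)).comp_const_sub x h
      have h4 : HasDerivAt (fun h : ℝ => 2 * h * m x) (2 * m x) h := by
        have e : (fun h : ℝ => 2 * h * m x) = fun h : ℝ => h * (2 * m x) := by
          funext h; ring
        rw [e]
        simpa using (hasDerivAt_id h).mul_const (2 * m x)
      exact ((h1.sub h2).sub h4).congr_deriv (by push_cast; ring)
    · refine Eventually.of_forall fun h => ?_
      exact ((hasDerivAt_pow 3 h).const_mul (4 : ℝ)).congr_deriv (by push_cast; ring)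
    · filter_upwards [hpos] with h hh
      exact ne_of_gt (by positivity)
    · have hc : Continuous fun h : ℝ => F (x + h) - F (x - h) - 2 * h * m x :=
        ((hFc.comp (continuous_const.add continuous_id)).sub
          (hFc.comp (continuous_const.sub continuous_id))).sub (by continuity)
      have ht := (hc.tendsto 0).mono_left (nhdsWithin_le_nhds (s := Set.Ioi (0:ℝ)))
      have h0 : F (x + 0) - F (x - 0) - 2 * 0 * m x = 0 := by norm_num
      rwa [h0] at ht
    · have hc : Continuous fun h : ℝ => 4 * h ^ 3 := by continuity
      have ht := (hc.tendsto 0).mono_left (nhdsWithin_le_nhds (s := Set.Ioi (0:ℝ)))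
      norm_num at ht
      exact ht
  -- Step 0
  refine HasDerivAt.lhopital_zero_nhdsGT
    (f' := fun h : ℝ => F (x + h) - F (x - h) - 2 * h * m x)
    (g' := fun h : ℝ => 4 * h ^ 3) ?_ ?_ ?_ ?_ ?_ T1
  · refine Eventually.of_forall fun h => ?_
    have h1 := hasDerivAt_integral_right' F hFc x h
    have h2 := hasDerivAt_integral_left' F hFc x h
    have h4 : HasDerivAt (fun h : ℝ => h ^ 2 * m x) (2 * h * m x) h := by
      exact ((hasDerivAt_pow 2 h).mul_const (m x)).congr_deriv (by push_cast; ring)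
    exact (h1.sub h2).sub h4
  · refine Eventually.of_forall fun h => ?_
    exact (hasDerivAt_pow 4 h).congr_deriv (by push_cast; ring)
  · filter_upwards [hpos] with h hh
    exact ne_of_gt (by positivity)
  · have hc : Continuous fun h : ℝ =>
        ((∫ u in x..(x + h), F u) - ∫ u in (x - h)..x, F u) - h ^ 2 * m x := by
      have c1d : Differentiable ℝ fun h : ℝ => ∫ u in x..(x + h), F u :=
        fun h => (hasDerivAt_integral_right' F hFc x h).differentiableAt
      have c2d : Differentiable ℝ fun h : ℝ => ∫ u in (x - h)..x, F u :=
        fun h => (hasDerivAt_integral_left' F hFc x h).differentiableAt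
      have c1 := c1d.continuous
      have c2 := c2d.continuous
      exact (c1.sub c2).sub (by continuity)
    have ht := (hc.tendsto 0).mono_left (nhdsWithin_le_nhds (s := Set.Ioi (0:ℝ)))
    have h0 : ((∫ u in x..(x + 0), F u) - ∫ u in (x - 0)..x, F u) - (0:ℝ) ^ 2 * m x = 0 := by
      norm_num
    rwa [h0] at ht
  · have hc : Continuous fun h : ℝ => h ^ 4 := by continuity
    have ht := (hc.tendsto 0).mono_left (nhdsWithin_le_nhds (s := Set.Ioi (0:ℝ)))
    norm_num at ht
    exact ht

/-- Approximation error of the infinite toy forest: for `m` of class `C³` and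
`x ∈ (0,1)`, with `ψ k t` the mean of `m` over the cell containing `x` in the toy
partition of mesh `1/k` with offset `t`,
`k⁴ (∫₀¹ ψ k t dt − m(x))² → m″(x)²/144` as `k → ∞`; this is the entry
`c₂(m,x)/k⁴` of Table 1. -/
theorem toy_infinite_forest_approximation_error
    (m : ℝ → ℝ) (hm : ContDiff ℝ 3 m) (x : ℝ) (hx : x ∈ Set.Ioo (0 : ℝ) 1)
    (ψ : ℕ → ℝ → ℝ)
    (hψ : ψ = fun (k : ℕ) (t : ℝ) =>
      (k : ℝ) * ∫ u in (((⌊(k : ℝ) * x + t⌋ : ℝ) - t) / k)..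
          (((⌊(k : ℝ) * x + t⌋ : ℝ) + 1 - t) / k), m u) :
    Tendsto (fun k : ℕ => (k : ℝ) ^ 4 * ((∫ t in (0 : ℝ)..1, ψ k t) - m x) ^ 2)
      atTop (nhds (deriv (deriv m) x ^ 2 / 144)) := by
  have hmc : Continuous m := hm.continuous
  set F : ℝ → ℝ := fun y => ∫ v in x..y, m v with hFdef
  have T0 := taylor_limit m hm x F hFdef
  have hcomp : Tendsto (fun k : ℕ => 1 / (k : ℝ)) atTop (nhdsWithin 0 (Set.Ioi 0)) := by
    rw [tendsto_nhdsWithin_iff]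
    constructor
    · exact tendsto_one_div_atTop_nhds_zero_nat
    · filter_upwards [eventually_ge_atTop 1] with k hk
      have hK : (0:ℝ) < k := by exact_mod_cast hk
      exact Set.mem_Ioi.mpr (by positivity)
  have TQ := (T0.comp hcomp).pow 2
  have hlim : (deriv (deriv m) x / 12) ^ 2 = deriv (deriv m) x ^ 2 / 144 := by ring
  rw [hlim] at TQ
  refine Filter.Tendsto.congr' ?_ TQ
  filter_upwards [eventually_ge_atTop 1] with k hk
  have hK : (0:ℝ) < k := by exact_mod_cast hk
  have hKne : (k:ℝ) ≠ 0 := ne_of_gt hK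
  have hint : (∫ t in (0 : ℝ)..1, ψ k t)
      = (k:ℝ)^2 * ((∫ u in x..(x + 1/k), F u) - ∫ u in (x - 1/k)..x, F u) := by
    rw [hψ]
    exact key_identity m hmc x k hk F hFdef
  simp only [Function.comp]
  rw [hint]
  have h1k : (1:ℝ)/k ≠ 0 := by positivity
  field_simp
end
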